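/- arXiv:2401.00818 — 5 statements merged into one kernel-verified Lean document; each statement's English description precedes it below -/
import Mathlib

section
/- Let (a_n)_{n≥0} be a real sequence such that n·a_{n−1} = O(a_n) as n → ∞, and such that for all but finitely many n the quantity x_k = |a_k·a_{n−k}| is decreasing in k for k < n/2 (i.e. |a_{k+1}·a_{n−k−1}| ≤ |a_k·a_{n−k}| whenever k+1 ≤ n/2). Then (a_n) is gargantuan. -/
open Filter Asymptotics Finset

/-- A real sequence `u` is *gargantuan* if `u (n-1) / u n → 0` and, for every `r ≥ 1`,
`∑_{k=r}^{n-r} |u k * u (n-k)| = O(u (n-r))` as `n → ∞`. -/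
def Gargantuan (u : ℕ → ℝ) : Prop :=
  Tendsto (fun n => u (n - 1) / u n) atTop (nhds 0) ∧
    ∀ r : ℕ, 1 ≤ r →
      (fun n => ∑ k ∈ Finset.Icc r (n - r), |u k * u (n - k)|) =O[atTop]
        fun n => u (n - r)

/-- The exponential `exp C` of a formal power series `C` (intended for `C` with zero
constant term): the coefficient of `X^n` is `∑_{k=0}^{n} [X^n] (C^k) / k!`. -/
noncomputable def expPS (C : PowerSeries ℝ) : PowerSeries ℝ :=
  PowerSeries.mk fun n =>
    ∑ k ∈ Finset.range (n + 1), (PowerSeries.coeff (R := ℝ) n (C ^ k)) / (Nat.factorial k)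

/-- The decreasingness chain: terms decrease along the first half. -/
lemma garg_chain (a : ℕ → ℝ) (n : ℕ)
    (hP : ∀ k, 2 * (k + 1) ≤ n → |a (k + 1) * a (n - k - 1)| ≤ |a k * a (n - k)|) :
    ∀ j b : ℕ, b ≤ j → 2 * j ≤ n → |a j * a (n - j)| ≤ |a b * a (n - b)| := by
  intro j
  induction j with
  | zero =>
      intro b hb _
      obtain rfl : b = 0 := Nat.le_zero.mp hb
      exact le_refl _
  | succ j ih =>
      intro b hb hjn
      rcases Nat.eq_or_lt_of_le hb with h | h
      · rw [h]
      · have hbj : b ≤ j := by omega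
        have step : |a (j + 1) * a (n - (j + 1))| ≤ |a j * a (n - j)| := by
          have := hP j hjn
          have : |a (j + 1) * a (n - j - 1)| ≤ |a j * a (n - j)| := this
          simpa [Nat.sub_sub] using this
        exact step.trans (ih b hbj (by omega))

/-- a sufficient condition for a sequence to be gargantuan. -/
theorem sufficient_condition_gargantuan
    (a : ℕ → ℝ)
    (h1 : (fun n : ℕ => (n : ℝ) * a (n - 1)) =O[atTop] fun n => a n)
    (h2 : ∀ᶠ n in atTop, ∀ k, 2 * (k + 1) ≤ n →
      |a (k + 1) * a (n - k - 1)| ≤ |a k * a (n - k)|) :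
    Gargantuan a := by
  obtain ⟨C, hC, hbd⟩ := h1.exists_nonneg
  rw [isBigOWith_iff, eventually_atTop] at hbd
  obtain ⟨N1, hN1⟩ := hbd
  rw [eventually_atTop] at h2
  obtain ⟨N2, hN2⟩ := h2
  constructor
  · -- part 1: a (n-1) / a n → 0
    have hsq : ∀ᶠ n : ℕ in atTop, ‖a (n - 1) / a n‖ ≤ C / n := by
      rw [eventually_atTop]
      refine ⟨max N1 1, fun n hn => ?_⟩
      have hn1 : N1 ≤ n := le_trans (le_max_left _ _) hn
      have hnpos : (0 : ℝ) < n := by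
        have : 1 ≤ n := le_trans (le_max_right _ _) hn
        exact_mod_cast this
      have key := hN1 n hn1
      simp only [Real.norm_eq_abs, abs_mul, Nat.abs_cast] at key
      rcases eq_or_ne (a n) 0 with h0 | h0
      · have : (n : ℝ) * |a (n - 1)| ≤ 0 := by simpa [h0] using key
        have h5 : |a (n - 1)| ≤ 0 := by
          by_contra h
          push_neg at h
          nlinarith
        have han : a (n - 1) = 0 := abs_eq_zero.mp (le_antisymm h5 (abs_nonneg _))
        simp [han]
        positivity
      · rw [Real.norm_eq_abs, abs_div]
        rw [div_le_div_iff₀ (abs_pos.mpr h0) hnpos]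
        nlinarith [abs_nonneg (a (n-1)), abs_nonneg (a n)]
    have hlim : Tendsto (fun n : ℕ => C / n) atTop (nhds 0) :=
      tendsto_const_div_atTop_nhds_zero_nat C
    exact squeeze_zero_norm' hsq hlim
  · -- part 2
    intro r hr
    rw [isBigO_iff]
    refine ⟨2 * |a r| + 2 * C * |a (r + 1)|, ?_⟩
    rw [eventually_atTop]
    refine ⟨max N2 (N1 + 2 * r + 2), fun n hn => ?_⟩
    have hn2 : N2 ≤ n := le_trans (le_max_left _ _) hn
    have hn1 : N1 + 2 * r + 2 ≤ n := le_trans (le_max_right _ _) hn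
    have hP := hN2 n hn2
    set x : ℕ → ℝ := fun k => |a k * a (n - k)| with hx
    -- every middle term is at most x (r+1)
    have hmid : ∀ k ∈ Finset.Icc (r + 1) (n - r - 1), x k ≤ x (r + 1) := by
      intro k hk
      rw [Finset.mem_Icc] at hk
      rcases le_or_gt (2 * k) n with hk2 | hk2
      · exact garg_chain a n hP k (r + 1) hk.1 hk2
      · -- use symmetry: x k = x (n - k)
        have hkn : k ≤ n := by omega
        have hsymm : x k = x (n - k) := by
          simp only [hx]
          rw [Nat.sub_sub_self hkn, abs_mul, abs_mul, mul_comm]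
        rw [hsymm]
        exact garg_chain a n hP (n - k) (r + 1) (by omega) (by omega)
    -- the total sum
    have hsplit : ∑ k ∈ Finset.Icc r (n - r), x k
        = x r + (∑ k ∈ Finset.Icc (r + 1) (n - r - 1), x k) + x (n - r) := by
      obtain ⟨m, hm⟩ : ∃ m, n - r = m + 1 := ⟨n - r - 1, by omega⟩
      have hm1 : n - r - 1 = m := by omega
      rw [hm1, hm, Finset.Icc_eq_cons_Ioc (by omega : r ≤ m + 1), Finset.sum_cons,
        ← Finset.Icc_add_one_left_eq_Ioc, Finset.sum_Icc_succ_top (by omega : r + 1 ≤ m + 1)]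
      ring
    have hcard : (∑ k ∈ Finset.Icc (r + 1) (n - r - 1), x k)
        ≤ (Finset.Icc (r + 1) (n - r - 1)).card • x (r + 1) :=
      Finset.sum_le_card_nsmul _ _ _ hmid
    have hcard2 : ((Finset.Icc (r + 1) (n - r - 1)).card : ℝ) ≤ n := by
      rw [Nat.card_Icc]
      exact_mod_cast (by omega : n - r - 1 + 1 - (r + 1) ≤ n)
    have hx1nonneg : 0 ≤ x (r + 1) := abs_nonneg _
    have hmidsum : (∑ k ∈ Finset.Icc (r + 1) (n - r - 1), x k) ≤ (n : ℝ) * x (r + 1) := by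
      refine hcard.trans ?_
      rw [nsmul_eq_mul]
      exact mul_le_mul_of_nonneg_right hcard2 hx1nonneg
    -- x (n - r) = x r
    have hxnr : x (n - r) = x r := by
      simp only [hx]
      rw [Nat.sub_sub_self (by omega : r ≤ n), abs_mul, abs_mul, mul_comm]
    -- bound n * x (r+1)
    have hkey := hN1 (n - r) (by omega)
    simp only [Real.norm_eq_abs, abs_mul, Nat.abs_cast] at hkey
    have hsub : n - r - 1 = (n - r) - 1 := rfl
    have hnle : (n : ℝ) ≤ 2 * ((n - r : ℕ) : ℝ) := by
      exact_mod_cast (by omega : n ≤ 2 * (n - r))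
    have hbound : (n : ℝ) * x (r + 1) ≤ 2 * C * |a (r + 1)| * |a (n - r)| := by
      simp only [hx, abs_mul]
      have h3 : (n : ℝ) * |a (n - (r + 1))| ≤ 2 * C * |a (n - r)| := by
        have h4 : n - (r + 1) = (n - r) - 1 := by omega
        rw [h4]
        nlinarith [abs_nonneg (a ((n - r) - 1)), abs_nonneg (a (n - r))]
      calc (n : ℝ) * (|a (r + 1)| * |a (n - (r + 1))|)
          = |a (r + 1)| * ((n : ℝ) * |a (n - (r + 1))|) := by ring
        _ ≤ |a (r + 1)| * (2 * C * |a (n - r)|) :=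
            mul_le_mul_of_nonneg_left h3 (abs_nonneg _)
        _ = 2 * C * |a (r + 1)| * |a (n - r)| := by ring
    -- finish
    have hsumnonneg : 0 ≤ ∑ k ∈ Finset.Icc r (n - r), x k :=
      Finset.sum_nonneg fun k _ => abs_nonneg _
    rw [Real.norm_eq_abs, Real.norm_eq_abs, abs_of_nonneg hsumnonneg]
    have hxr : x r = |a r| * |a (n - r)| := by simp only [hx]; rw [abs_mul]
    calc ∑ k ∈ Finset.Icc r (n - r), x k
        = x r + (∑ k ∈ Finset.Icc (r + 1) (n - r - 1), x k) + x (n - r) := hsplit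
      _ ≤ x r + (n : ℝ) * x (r + 1) + x r := by rw [hxnr]; linarith
      _ ≤ 2 * (|a r| * |a (n - r)|) + 2 * C * |a (r + 1)| * |a (n - r)| := by
          rw [hxr]; linarith
      _ ≤ (2 * |a r| + 2 * C * |a (r + 1)|) * |a (n - r)| := by ring_nf; linarith
end

section
/- If (a_n)_{n≥0} and (b_n)_{n≥0} are two non-negative gargantuan real sequences, then the pointwise product sequence (a_n·b_n)_{n≥0} is a non-negative gargantuan sequence. -/
open Filter Asymptotics Finset

/-- the product of two non-negative gargantuan sequences is
non-negative gargantuan. -/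
theorem gargantuan_mul
    (a b : ℕ → ℝ)
    (ha : ∀ n, 0 ≤ a n) (hb : ∀ n, 0 ≤ b n)
    (hga : Gargantuan a) (hgb : Gargantuan b) :
    (∀ n, 0 ≤ a n * b n) ∧ Gargantuan (fun n => a n * b n) := by
  refine ⟨fun n => mul_nonneg (ha n) (hb n), ?_, ?_⟩
  · have h := hga.1.mul hgb.1
    simp only [mul_zero] at h
    refine h.congr fun n => ?_
    simp [div_mul_div_comm]
  · intro r hr
    obtain ⟨Ca, hCa⟩ := (hga.2 r hr).isBigOWith
    obtain ⟨Cb, hCb⟩ := (hgb.2 r hr).isBigOWith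
    rw [isBigO_iff]
    refine ⟨Ca * Cb, ?_⟩
    filter_upwards [hCa.bound, hCb.bound] with n hna hnb
    simp only [Real.norm_eq_abs] at hna hnb ⊢
    set S := Finset.Icc r (n - r) with hS
    have habs : ∀ k, |a k * a (n - k)| = a k * a (n - k) :=
      fun k => abs_of_nonneg (mul_nonneg (ha _) (ha _))
    have hbabs : ∀ k, |b k * b (n - k)| = b k * b (n - k) :=
      fun k => abs_of_nonneg (mul_nonneg (hb _) (hb _))
    have hta : ∑ k ∈ S, |a k * a (n - k)| ≤ Ca * a (n - r) := by
      rw [abs_of_nonneg (Finset.sum_nonneg fun k _ => abs_nonneg _),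
        abs_of_nonneg (ha _)] at hna
      exact hna
    have htb : ∑ k ∈ S, |b k * b (n - k)| ≤ Cb * b (n - r) := by
      rw [abs_of_nonneg (Finset.sum_nonneg fun k _ => abs_nonneg _),
        abs_of_nonneg (hb _)] at hnb
      exact hnb
    have hCbnn : 0 ≤ Cb * b (n - r) :=
      (Finset.sum_nonneg fun j _ => abs_nonneg _).trans htb
    have hbb : ∀ k ∈ S, b k * b (n - k) ≤ Cb * b (n - r) := fun k hk => by
      calc b k * b (n - k) = |b k * b (n - k)| := (hbabs k).symm
        _ ≤ ∑ j ∈ S, |b j * b (n - j)| :=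
            Finset.single_le_sum (f := fun j => |b j * b (n - j)|) (fun j _ => abs_nonneg _) hk
        _ ≤ Cb * b (n - r) := htb
    rw [abs_of_nonneg (Finset.sum_nonneg fun k _ => abs_nonneg _)]
    calc ∑ k ∈ S, |a k * b k * (a (n - k) * b (n - k))|
        = ∑ k ∈ S, (a k * a (n - k)) * (b k * b (n - k)) := by
          refine Finset.sum_congr rfl fun k _ => ?_
          rw [abs_of_nonneg (mul_nonneg (mul_nonneg (ha _) (hb _)) (mul_nonneg (ha _) (hb _)))]; ring
      _ ≤ ∑ k ∈ S, (a k * a (n - k)) * (Cb * b (n - r)) :=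
          Finset.sum_le_sum fun k hk =>
            mul_le_mul_of_nonneg_left (hbb k hk) (mul_nonneg (ha _) (ha _))
      _ = (∑ k ∈ S, a k * a (n - k)) * (Cb * b (n - r)) := by
          rw [Finset.sum_mul]
      _ ≤ (Ca * a (n - r)) * (Cb * b (n - r)) := by
          refine mul_le_mul_of_nonneg_right ?_ hCbnn
          calc ∑ k ∈ S, a k * a (n - k) = ∑ k ∈ S, |a k * a (n - k)| :=
                Finset.sum_congr rfl fun k _ => (habs k).symm
            _ ≤ Ca * a (n - r) := hta
      _ = Ca * Cb * |a (n - r) * b (n - r)| := by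
          rw [abs_of_nonneg (mul_nonneg (ha _) (hb _))]; ring
end

section
/- (Bender's theorem.) Let (u_n)_{n≥1} be a real sequence with u_n ≠ 0 for all n ≥ 1 which is gargantuan, and let U = Σ_{n≥1} u_n X^n ∈ ℝ[[X]]. Let (f_k)_{k≥0} be a real sequence whose power series Σ_k f_k x^k has positive radius of convergence, and define the formal power series V = Σ_{n≥0} v_n X^n = Σ_{k≥0} f_k U^k and W = Σ_{n≥0} w_n X^n = Σ_{k≥0} (k+1)·f_{k+1}·U^k (both well defined since U has zero constant term). Then for every integer r ≥ 0, v_n = Σ_{k=0}^{r} w_k·u_{n−k} + O(u_{n−r−1}) as n → ∞, and the sequence (v_n) is gargantuan. -/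
open Filter Asymptotics Finset

noncomputable def aa (u : ℕ → ℝ) (n k : ℕ) : ℝ :=
  PowerSeries.coeff (R := ℝ) n ((PowerSeries.mk u) ^ k)

lemma aa_zero (u : ℕ → ℝ) (n : ℕ) : aa u n 0 = if n = 0 then 1 else 0 := by
  simp [aa, PowerSeries.coeff_one]

lemma aa_succ (u : ℕ → ℝ) (n k : ℕ) :
    aa u n (k+1) = ∑ j ∈ range (n+1), u j * aa u (n-j) k := by
  simp only [aa, pow_succ']
  rw [PowerSeries.coeff_mul, Finset.Nat.sum_antidiagonal_eq_sum_range_succ_mk]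
  simp [PowerSeries.coeff_mk]

lemma aa_vanish (u : ℕ → ℝ) (hu0 : u 0 = 0) : ∀ k n, n < k → aa u n k = 0 := by
  intro k
  induction k with
  | zero => intro n hn; omega
  | succ k ih =>
    intro n hn
    rw [aa_succ]
    refine Finset.sum_eq_zero ?_
    intro j hj
    simp only [Finset.mem_range] at hj
    rcases Nat.eq_zero_or_pos j with h | h
    · subst h; simp [hu0]
    · rw [ih (n - j) (by omega), mul_zero]

lemma aa_diag (u : ℕ → ℝ) (hu0 : u 0 = 0) : ∀ k, aa u k k = u 1 ^ k := by
  intro k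
  induction k with
  | zero => simp [aa_zero]
  | succ k ih =>
    rw [aa_succ]
    rw [Finset.sum_eq_single 1]
    · have : k + 1 - 1 = k := by omega
      rw [this, ih, pow_succ']
    · intro j hj hj1
      simp only [Finset.mem_range] at hj
      rcases Nat.eq_zero_or_pos j with h | h
      · subst h; simp [hu0]
      · rw [aa_vanish u hu0 k (k+1-j) (by omega), mul_zero]
    · intro h
      exfalso
      exact h (Finset.mem_range.mpr (by omega))

/-- upgrade an eventual bound to a global bound when denominator positive -/
lemma glob (g h : ℕ → ℝ) (hg : ∀ n, 0 ≤ g n) (hh : ∀ n, 0 < h n)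
    (C : ℝ) (N : ℕ) (H : ∀ n ≥ N, g n ≤ C * h n) :
    ∃ C', 0 ≤ C' ∧ ∀ n, g n ≤ C' * h n := by
  have hsum : 0 ≤ ∑ i ∈ range N, g i / h i :=
    Finset.sum_nonneg fun i _ => div_nonneg (hg i) (hh i).le
  refine ⟨max C 0 + ∑ i ∈ range N, g i / h i, by positivity, ?_⟩
  intro n
  by_cases hn : N ≤ n
  · calc g n ≤ C * h n := H n hn
      _ ≤ (max C 0 + ∑ i ∈ range N, g i / h i) * h n := by
        apply mul_le_mul_of_nonneg_right _ (hh n).le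
        calc C ≤ max C 0 := le_max_left _ _
          _ ≤ _ := le_add_of_nonneg_right hsum
  · have hmem : n ∈ range N := mem_range.mpr (lt_of_not_ge hn)
    have h1 : g n / h n ≤ ∑ i ∈ range N, g i / h i :=
      Finset.single_le_sum (fun i _ => div_nonneg (hg i) (hh i).le) hmem
    have h2 : g n = (g n / h n) * h n := (div_mul_cancel₀ _ (hh n).ne').symm
    rw [h2]
    apply mul_le_mul_of_nonneg_right _ (hh n).le
    calc g n / h n ≤ ∑ i ∈ range N, g i / h i := h1
      _ ≤ _ := le_add_of_nonneg_left (le_max_right C 0)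

lemma G1' (u : ℕ → ℝ) (hune : ∀ n, 1 ≤ n → u n ≠ 0) (hgarg : Gargantuan u) : ∀ ε : ℝ, 0 < ε → ∃ N, 1 ≤ N ∧ ∀ n ≥ N, |u (n-1)| ≤ ε * |u n| := by
  intro ε hε
  obtain ⟨N, hN⟩ := (Metric.tendsto_atTop.mp hgarg.1) ε hε
  refine ⟨max N 1, le_max_right _ _, ?_⟩
  intro n hn
  have hn1 : 1 ≤ n := le_trans (le_max_right N 1) hn
  have hne : u n ≠ 0 := hune n hn1
  have h1 : |u (n-1) / u n| < ε := by
    have := hN n (le_trans (le_max_left N 1) hn)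
    rwa [Real.dist_eq, sub_zero] at this
  have h2 : |u (n-1)| = |u (n-1) / u n| * |u n| := by
    rw [← abs_mul, div_mul_cancel₀ _ hne]
  rw [h2]
  exact mul_le_mul_of_nonneg_right h1.le (abs_nonneg _)

lemma chain (u : ℕ → ℝ) (hune : ∀ n, 1 ≤ n → u n ≠ 0) (hgarg : Gargantuan u) : ∀ ε : ℝ, 0 < ε → ε < 1 →
    ∃ K : ℝ, 1 ≤ K ∧ ∃ N, ∀ n ≥ N, ∀ d ≤ n, |u (n - d)| ≤ K * ε^d * |u n| := by
  intro ε hε hε1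
  obtain ⟨N, hN1, hN⟩ := G1' u hune hgarg ε hε
  -- step chain as long as indices stay ≥ N
  have key : ∀ d n, N ≤ n - d → |u (n - d)| ≤ ε^d * |u n| := by
    intro d
    induction d with
    | zero => intro n _; simp
    | succ d ih =>
      intro n hnd
      have h1 : N ≤ n - d := by omega
      have h2 : n - (d+1) = (n - d) - 1 := by omega
      calc |u (n - (d+1))| = |u ((n-d) - 1)| := by rw [h2]
        _ ≤ ε * |u (n - d)| := hN (n-d) h1
        _ ≤ ε * (ε^d * |u n|) := mul_le_mul_of_nonneg_left (ih n h1) hε.le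
        _ = ε^(d+1) * |u n| := by ring
  have hδ : 0 < ε^N * |u N| := by
    have := hune N hN1
    positivity
  set M : ℝ := ∑ i ∈ range N, |u i| with hM
  have hM0 : 0 ≤ M := Finset.sum_nonneg fun i _ => abs_nonneg _
  refine ⟨max 1 (M / (ε^N * |u N|)), le_max_left _ _, N, ?_⟩
  intro n hn d hd
  by_cases hc : N ≤ n - d
  · calc |u (n-d)| ≤ ε^d * |u n| := key d n hc
      _ ≤ max 1 (M / (ε^N * |u N|)) * ε^d * |u n| := by
        rw [mul_assoc]
        have h0 : 0 ≤ ε^d * |u n| := by positivity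
        nlinarith [le_max_left (1:ℝ) (M / (ε^N * |u N|))]
  · -- n - d < N : |u (n-d)| ≤ M and ε^d * |u n| ≥ ε^n * |u n| ≥ ε^N |u N|
    have hb : |u (n-d)| ≤ M := by
      apply Finset.single_le_sum (f := fun i => |u i|) (fun i _ => abs_nonneg _)
      exact mem_range.mpr (lt_of_not_ge hc)
    have hlow : ε^N * |u N| ≤ ε^d * |u n| := by
      have h3 : n - (n - N) = N := by omega
      have h4 : ε^(n-N) * ε^N = ε^n := by
        rw [← pow_add]
        congr 1
        omega
      have h5 : |u N| ≤ ε^(n-N) * |u n| := by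
        have hk := key (n - N) n (by omega)
        rwa [h3] at hk
      have h6 : ε^n ≤ ε^d := pow_le_pow_of_le_one hε.le hε1.le hd
      have h7 : ε^N * |u N| ≤ ε^n * |u n| := by
        calc ε^N * |u N| ≤ ε^N * (ε^(n-N) * |u n|) :=
              mul_le_mul_of_nonneg_left h5 (by positivity)
          _ = ε^n * |u n| := by rw [← h4]; ring
      calc ε^N * |u N| ≤ ε^n * |u n| := h7
        _ ≤ ε^d * |u n| := mul_le_mul_of_nonneg_right h6 (abs_nonneg _)
    calc |u (n-d)| ≤ M := hb
      _ = (M / (ε^N * |u N|)) * (ε^N * |u N|) := (div_mul_cancel₀ _ hδ.ne').symm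
      _ ≤ (M / (ε^N * |u N|)) * (ε^d * |u n|) :=
          mul_le_mul_of_nonneg_left hlow (div_nonneg hM0 hδ.le)
      _ ≤ max 1 (M / (ε^N * |u N|)) * (ε^d * |u n|) := by
          apply mul_le_mul_of_nonneg_right (le_max_right _ _) (by positivity)
      _ = max 1 (M / (ε^N * |u N|)) * ε^d * |u n| := by ring

lemma G2' (u : ℕ → ℝ) (hgarg : Gargantuan u) : ∀ r, 1 ≤ r → ∃ A : ℝ, 0 ≤ A ∧ ∃ N, ∀ n ≥ N,
    ∑ k ∈ Icc r (n-r), |u k * u (n-k)| ≤ A * |u (n-r)| := by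
  intro r hr
  obtain ⟨c, hc0, hc⟩ := (hgarg.2 r hr).exists_nonneg
  obtain ⟨N, hN⟩ := eventually_atTop.mp hc.bound
  refine ⟨c, hc0, N, ?_⟩
  intro n hn
  have := hN n hn
  simp only [Real.norm_eq_abs] at this
  exact le_trans (le_abs_self _) this

lemma GB (u : ℕ → ℝ) (hune : ∀ n, 1 ≤ n → u n ≠ 0) (hgarg : Gargantuan u) : ∃ A : ℝ, 1 ≤ A ∧ ∀ s, ∑ j ∈ Icc 1 (s-1), |u j * u (s-j)| ≤ A * |u (s-1)| := by
  obtain ⟨A₀, hA0, N, hN⟩ := G2' u hgarg 1 le_rfl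
  obtain ⟨C', hC0, hC⟩ := glob
    (fun s => ∑ j ∈ Icc 1 ((s+2)-1), |u j * u ((s+2)-j)|)
    (fun s => |u (s+1)|)
    (fun s => Finset.sum_nonneg fun j _ => abs_nonneg _)
    (fun s => abs_pos.mpr (hune (s+1) (by omega)))
    A₀ N
    (by
      intro s hs
      have := hN (s+2) (by omega)
      simpa using this)
  refine ⟨max C' 1, le_max_right _ _, ?_⟩
  intro s
  match s with
  | 0 =>
    simp only [Nat.zero_sub, Finset.Icc_eq_empty_of_lt (by norm_num : (1:ℕ) > 0), Finset.sum_empty]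
    positivity
  | 1 =>
    simp only [Nat.sub_self, Finset.Icc_eq_empty_of_lt (by norm_num : (1:ℕ) > 0), Finset.sum_empty]
    positivity
  | (s+2) =>
    have h1 := hC s
    calc ∑ j ∈ Icc 1 ((s+2)-1), |u j * u ((s+2)-j)| ≤ C' * |u (s+1)| := h1
      _ ≤ max C' 1 * |u (s+1)| :=
          mul_le_mul_of_nonneg_right (le_max_left _ _) (abs_nonneg _)
      _ = max C' 1 * |u ((s+2)-1)| := by norm_num

lemma ML (u : ℕ → ℝ) (hu0 : u 0 = 0) (hune : ∀ n, 1 ≤ n → u n ≠ 0) (hgarg : Gargantuan u) :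
    ∃ B : ℝ, 1 ≤ B ∧ ∀ k n, |aa u n (k+1)| ≤ B^(k+1) * |u (n-k)| := by
  obtain ⟨A, hA1, hA⟩ := GB u hune hgarg
  have hA0 : (0:ℝ) ≤ A := le_trans zero_le_one hA1
  refine ⟨A, hA1, ?_⟩
  intro k
  induction k with
  | zero =>
    intro n
    have h1 : aa u n 1 = u n := by
      rw [aa, pow_one, PowerSeries.coeff_mk]
    rw [h1, pow_one, Nat.sub_zero]
    nlinarith [abs_nonneg (u n)]
  | succ k ih =>
    intro n
    rw [aa_succ]
    calc |∑ j ∈ range (n+1), u j * aa u (n-j) (k+1)|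
        ≤ ∑ j ∈ range (n+1), |u j * aa u (n-j) (k+1)| :=
          Finset.abs_sum_le_sum_abs _ _
      _ = ∑ j ∈ range (n+1), |u j| * |aa u (n-j) (k+1)| :=
          Finset.sum_congr rfl fun j _ => abs_mul _ _
      _ ≤ ∑ j ∈ range (n+1), |u j| * (A^(k+1) * |u ((n-k)-j)|) := by
          refine Finset.sum_le_sum fun j _ => ?_
          have hih := ih (n-j)
          rw [Nat.sub_right_comm] at hih
          exact mul_le_mul_of_nonneg_left hih (abs_nonneg _)
      _ = A^(k+1) * ∑ j ∈ range (n+1), |u j| * |u ((n-k)-j)| := by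
          rw [Finset.mul_sum]
          exact Finset.sum_congr rfl fun j _ => by ring
      _ ≤ A^(k+1) * (A * |u ((n-k)-1)|) := by
          refine mul_le_mul_of_nonneg_left ?_ (by positivity)
          have hsub : Icc 1 ((n-k)-1) ⊆ range (n+1) := by
            intro j hj; simp only [mem_Icc] at hj; simp only [mem_range]; omega
          have hz : ∀ j ∈ range (n+1), j ∉ Icc 1 ((n-k)-1) →
              |u j| * |u ((n-k)-j)| = 0 := by
            intro j _ hj2
            simp only [mem_Icc, not_and_or, not_le] at hj2
            rcases hj2 with h | h
            · have hj0 : j = 0 := by omega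
              subst hj0; simp [hu0]
            · have hj0 : (n-k) - j = 0 := by omega
              rw [hj0]; simp [hu0]
          rw [← Finset.sum_subset hsub hz]
          calc ∑ j ∈ Icc 1 ((n-k)-1), |u j| * |u ((n-k)-j)|
              = ∑ j ∈ Icc 1 ((n-k)-1), |u j * u ((n-k)-j)| :=
                Finset.sum_congr rfl fun j _ => (abs_mul _ _).symm
            _ ≤ A * |u ((n-k)-1)| := hA (n-k)
      _ = A^(k+1+1) * |u (n-(k+1))| := by
          rw [show (n-k)-1 = n-(k+1) by omega]
          ring

lemma CONV (u : ℕ → ℝ) (hu0 : u 0 = 0) (hune : ∀ n, 1 ≤ n → u n ≠ 0) (hgarg : Gargantuan u) : ∀ p, 1 ≤ p → ∀ s : ℕ, ∃ C : ℝ, 0 ≤ C ∧ ∃ N, ∀ n ≥ N,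
    ∑ m ∈ Icc p (n-p), |u m| * |u (n-m-s)| ≤ C * |u (n-p)| := by
  intro p hp s
  obtain ⟨A, hA0, N₂, hA⟩ := G2' u hgarg p hp
  obtain ⟨K, hK1, N₃, hK⟩ := chain u hune hgarg (1/2) (by norm_num) (by norm_num)
  have hK0 : (0:ℝ) ≤ K := le_trans zero_le_one hK1
  set M : ℝ := ∑ i ∈ range p, |u i| with hM
  have hM0 : 0 ≤ M := Finset.sum_nonneg fun i _ => abs_nonneg _
  refine ⟨A*K + s*M*K, by positivity, N₂ + N₃ + 2*p + 2*s + 2, ?_⟩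
  intro n hn
  have h1 : p ≤ n - s - p + 1 := by omega
  have h2 : n - s - p + 1 ≤ n - p + 1 := by omega
  have hsplit : ∑ m ∈ Icc p (n-p), (fun m => |u m| * |u (n-m-s)|) m
      = ∑ m ∈ Ico p (n-s-p+1), (fun m => |u m| * |u (n-m-s)|) m
        + ∑ m ∈ Ico (n-s-p+1) (n-p+1), (fun m => |u m| * |u (n-m-s)|) m := by
    rw [← Finset.Ico_add_one_right_eq_Icc, ← Finset.sum_Ico_consecutive _ h1 h2]
  simp only at hsplit
  rw [hsplit]
  have hpA : ∑ m ∈ Ico p (n-s-p+1), |u m| * |u (n-m-s)| ≤ A * K * |u (n-p)| := by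
    have e1 : ∑ m ∈ Ico p (n-s-p+1), |u m| * |u (n-m-s)|
        = ∑ m ∈ Icc p ((n-s)-p), |u m * u ((n-s)-m)| := by
      rw [← Finset.Ico_add_one_right_eq_Icc]
      refine Finset.sum_congr rfl fun m hm => ?_
      rw [abs_mul, Nat.sub_right_comm]
    rw [e1]
    have e2 : ∑ m ∈ Icc p ((n-s)-p), |u m * u ((n-s)-m)| ≤ A * |u ((n-s)-p)| :=
      hA (n-s) (by omega)
    have e3 : |u ((n-s)-p)| ≤ K * |u (n-p)| := by
      have h4 := hK (n-p) (by omega) s (by omega)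
      have h5 : (n-p) - s = (n-s) - p := by omega
      rw [h5] at h4
      calc |u ((n-s)-p)| ≤ K * (1/2:ℝ)^s * |u (n-p)| := h4
        _ ≤ K * 1 * |u (n-p)| := by
            apply mul_le_mul_of_nonneg_right _ (abs_nonneg _)
            apply mul_le_mul_of_nonneg_left _ hK0
            exact pow_le_one₀ (by norm_num) (by norm_num)
        _ = K * |u (n-p)| := by ring
    calc ∑ m ∈ Icc p ((n-s)-p), |u m * u ((n-s)-m)| ≤ A * |u ((n-s)-p)| := e2
      _ ≤ A * (K * |u (n-p)|) := mul_le_mul_of_nonneg_left e3 hA0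
      _ = A * K * |u (n-p)| := by ring
  have hpB : ∑ m ∈ Ico (n-s-p+1) (n-p+1), |u m| * |u (n-m-s)|
      ≤ s * M * K * |u (n-p)| := by
    have hterm : ∀ m ∈ Ico (n-s-p+1) (n-p+1), |u m| * |u (n-m-s)| ≤ M * (K * |u (n-p)|) := by
      intro m hm
      simp only [mem_Ico] at hm
      have hm1 : |u m| ≤ K * |u (n-p)| := by
        have h4 := hK (n-p) (by omega) ((n-p) - m) (by omega)
        have h5 : (n-p) - ((n-p) - m) = m := by omega
        rw [h5] at h4
        calc |u m| ≤ K * (1/2:ℝ)^((n-p)-m) * |u (n-p)| := h4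
          _ ≤ K * 1 * |u (n-p)| := by
              apply mul_le_mul_of_nonneg_right _ (abs_nonneg _)
              apply mul_le_mul_of_nonneg_left _ hK0
              exact pow_le_one₀ (by norm_num) (by norm_num)
          _ = K * |u (n-p)| := by ring
      have hm2 : |u (n-m-s)| ≤ M := by
        apply Finset.single_le_sum (f := fun i => |u i|) (fun i _ => abs_nonneg _)
        exact mem_range.mpr (by omega)
      calc |u m| * |u (n-m-s)| ≤ (K * |u (n-p)|) * M :=
            mul_le_mul hm1 hm2 (abs_nonneg _) (by positivity)
        _ = M * (K * |u (n-p)|) := by ring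
    calc ∑ m ∈ Ico (n-s-p+1) (n-p+1), |u m| * |u (n-m-s)|
        ≤ (Ico (n-s-p+1) (n-p+1)).card • (M * (K * |u (n-p)|)) :=
          Finset.sum_le_card_nsmul _ _ _ hterm
      _ = ((n-p+1) - (n-s-p+1) : ℕ) * (M * (K * |u (n-p)|)) := by
          rw [Nat.card_Ico, nsmul_eq_mul]
      _ = (s:ℝ) * (M * (K * |u (n-p)|)) := by
          congr 1
          have : (n-p+1) - (n-s-p+1) = s := by omega
          rw [this]
      _ = s * M * K * |u (n-p)| := by ring
  calc ∑ m ∈ Ico p (n-s-p+1), |u m| * |u (n-m-s)|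
        + ∑ m ∈ Ico (n-s-p+1) (n-p+1), |u m| * |u (n-m-s)|
      ≤ A * K * |u (n-p)| + s * M * K * |u (n-p)| := add_le_add hpA hpB
    _ = (A*K + s*M*K) * |u (n-p)| := by ring

lemma TRI (F : ℕ → ℕ → ℝ) (r : ℕ) :
    ∑ m ∈ range (r+1), ∑ j ∈ range (r+1-m), F m j
      = ∑ s ∈ range (r+1), ∑ m ∈ range (s+1), F m (s-m) := by
  induction r with
  | zero => simp
  | succ r ih =>
    have e1 : r + 2 - (r+1) = 1 := by omega
    have e2 : r + 1 - (r+1) = 0 := by omega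
    have h1 : ∀ m ∈ range (r+1), ∑ j ∈ range (r+2-m), F m j
        = (∑ j ∈ range (r+1-m), F m j) + F m (r+1-m) := by
      intro m hm
      have hm' : m ≤ r := by simpa [Nat.lt_succ_iff] using hm
      have h : r+2-m = (r+1-m)+1 := by omega
      rw [h, Finset.sum_range_succ]
    calc ∑ m ∈ range (r+1+1), ∑ j ∈ range (r+1+1-m), F m j
        = (∑ m ∈ range (r+1), ∑ j ∈ range (r+2-m), F m j)
            + ∑ j ∈ range (r+2-(r+1)), F (r+1) j := Finset.sum_range_succ _ _
      _ = ((∑ m ∈ range (r+1), ∑ j ∈ range (r+1-m), F m j)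
            + ∑ m ∈ range (r+1), F m (r+1-m)) + F (r+1) 0 := by
          rw [Finset.sum_congr rfl h1, Finset.sum_add_distrib, e1, Finset.sum_range_one]
      _ = (∑ s ∈ range (r+1), ∑ m ∈ range (s+1), F m (s-m))
            + ∑ m ∈ range (r+1+1), F m (r+1-m) := by
          rw [ih, Finset.sum_range_succ (f := fun m => F m (r+1-m)) (n := r+1), e2]
          ring
      _ = ∑ s ∈ range (r+1+1), ∑ m ∈ range (s+1), F m (s-m) := by
          conv_rhs => rw [Finset.sum_range_succ]

lemma Q (u : ℕ → ℝ) (hu0 : u 0 = 0) (hune : ∀ n, 1 ≤ n → u n ≠ 0) (hgarg : Gargantuan u) : ∀ k r : ℕ, ∃ C : ℝ, 0 ≤ C ∧ ∃ N, ∀ n ≥ N,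
    |aa u n (k+1) - (k+1 : ℝ) * ∑ j ∈ range (r+1), aa u j k * u (n-j)|
      ≤ C * |u (n-(r+1))| := by
  obtain ⟨B, hB1, hB⟩ := ML u hu0 hune hgarg
  have hB0 : (0:ℝ) ≤ B := le_trans zero_le_one hB1
  intro k
  induction k with
  | zero =>
    intro r
    refine ⟨0, le_rfl, 0, ?_⟩
    intro n _
    have h1 : aa u n 1 = u n := by rw [aa, pow_one, PowerSeries.coeff_mk]
    have h2 : ∑ j ∈ range (r+1), aa u j 0 * u (n-j) = u n := by
      rw [Finset.sum_eq_single 0]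
      · rw [aa_zero]; simp
      · intro j _ hj0
        rw [aa_zero, if_neg hj0, zero_mul]
      · intro h; exact absurd (Finset.mem_range.mpr (by omega)) h
    have h3 : aa u n (0+1) = u n := h1
    rw [h3, h2]
    norm_num
  | succ k ih =>
    intro r
    choose CC hCC0 NN hCN using ih
    obtain ⟨Cc, hCc0, Nc, hC⟩ := CONV u hu0 hune hgarg (r+1) (by omega) k
    have hC10 : (0:ℝ) ≤ ∑ m ∈ range (r+1), |u m| * CC (r-m) :=
      Finset.sum_nonneg fun m _ => mul_nonneg (abs_nonneg _) (hCC0 _)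
    set C1 : ℝ := ∑ m ∈ range (r+1), |u m| * CC (r-m) with hC1def
    refine ⟨C1 + B^(k+1) * Cc, by positivity,
      (∑ m ∈ range (r+1), NN (r-m)) + Nc + 2*r + 2*k + 8, ?_⟩
    intro n hn
    have hnc : n ≥ Nc := by omega
    have hnr : 2*r + 2*k + 8 ≤ n := by omega
    have hNm : ∀ m, m ≤ r → NN (r-m) ≤ n - m := by
      intro m hm
      have h1 : NN (r-m) ≤ ∑ m' ∈ range (r+1), NN (r-m') :=
        Finset.single_le_sum (f := fun m' => NN (r-m')) (fun i _ => Nat.zero_le _)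
          (Finset.mem_range.mpr (by omega))
      omega
    -- the decomposition identity
    have key : aa u n (k+1+1) - ((k:ℝ)+1+1) * ∑ j ∈ range (r+1), aa u j (k+1) * u (n-j)
        = (∑ m ∈ range (r+1), u m *
            (aa u (n-m) (k+1) - ((k:ℝ)+1) * ∑ j ∈ range (r-m+1), aa u j k * u ((n-m)-j)))
          + ∑ m ∈ Ico (r+1) (n-r), u m * aa u (n-m) (k+1) := by
      have h01 : (0:ℕ) ≤ r+1 := Nat.zero_le _
      have h02 : r+1 ≤ n+1 := by omega
      have h03 : r+1 ≤ n-r := by omega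
      have h04 : n-r ≤ n+1 := by omega
      have hsplit : aa u n (k+1+1)
          = ((∑ m ∈ Ico 0 (r+1), u m * aa u (n-m) (k+1))
            + (∑ m ∈ Ico (r+1) (n-r), u m * aa u (n-m) (k+1)))
            + (∑ m ∈ Ico (n-r) (n+1), u m * aa u (n-m) (k+1)) := by
        rw [aa_succ, Finset.range_eq_Ico,
          ← Finset.sum_Ico_consecutive (fun m => u m * aa u (n-m) (k+1)) h01 h02,
          ← Finset.sum_Ico_consecutive (fun m => u m * aa u (n-m) (k+1)) h03 h04,
          ← add_assoc]
      have hS3 : ∑ m ∈ Ico (n-r) (n+1), u m * aa u (n-m) (k+1)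
          = ∑ j ∈ range (r+1), aa u j (k+1) * u (n-j) := by
        refine Finset.sum_nbij' (i := fun m => n - m) (j := fun j => n - j)
          ?_ ?_ ?_ ?_ ?_
        · intro m hm
          simp only [Finset.mem_Ico] at hm
          exact Finset.mem_range.mpr (by omega)
        · intro j hj
          simp only [Finset.mem_range] at hj
          simp only [Finset.mem_Ico]
          omega
        · intro m hm
          simp only [Finset.mem_Ico] at hm
          omega
        · intro j hj
          simp only [Finset.mem_range] at hj
          omega
        · intro m hm
          simp only [Finset.mem_Ico] at hm
          have e : n - (n - m) = m := by omega
          rw [e]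
          ring
      have hS1 : ∑ m ∈ Ico 0 (r+1), u m * aa u (n-m) (k+1)
          = (∑ m ∈ range (r+1), u m *
              (aa u (n-m) (k+1) - ((k:ℝ)+1) * ∑ j ∈ range (r-m+1), aa u j k * u ((n-m)-j)))
            + ((k:ℝ)+1) * ∑ j ∈ range (r+1), aa u j (k+1) * u (n-j) := by
        have e0 : Ico 0 (r+1) = range (r+1) := by rw [Finset.range_eq_Ico]
        rw [e0]
        have e1 : ∀ m ∈ range (r+1),
            u m * aa u (n-m) (k+1)
              = u m * (aa u (n-m) (k+1)
                  - ((k:ℝ)+1) * ∑ j ∈ range (r-m+1), aa u j k * u ((n-m)-j))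
                + ((k:ℝ)+1) * ∑ j ∈ range (r-m+1), u m * aa u j k * u ((n-m)-j) := by
          intro m _
          have h' : ∑ j ∈ range (r-m+1), u m * aa u j k * u ((n-m)-j)
              = u m * ∑ j ∈ range (r-m+1), aa u j k * u ((n-m)-j) := by
            rw [Finset.mul_sum]
            exact Finset.sum_congr rfl fun j _ => by ring
          rw [h']
          ring
        rw [Finset.sum_congr rfl e1, Finset.sum_add_distrib]
        congr 1
        rw [← Finset.mul_sum]
        congr 1
        have e2 : ∀ m ∈ range (r+1),
            ∑ j ∈ range (r-m+1), u m * aa u j k * u ((n-m)-j)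
              = ∑ j ∈ range (r+1-m), u m * aa u j k * u (n-m-j) := by
          intro m hm
          simp only [Finset.mem_range] at hm
          have e : r-m+1 = r+1-m := by omega
          rw [e]
        rw [Finset.sum_congr rfl e2, TRI (fun m j => u m * aa u j k * u (n-m-j)) r]
        refine Finset.sum_congr rfl fun s hs => ?_
        simp only [Finset.mem_range] at hs
        have e3 : ∀ m ∈ range (s+1), u m * aa u (s-m) k * u (n-m-(s-m))
            = (u m * aa u (s-m) k) * u (n-s) := by
          intro m hm
          simp only [Finset.mem_range] at hm
          have e : n-m-(s-m) = n-s := by omega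
          rw [e]
        rw [Finset.sum_congr rfl e3, ← Finset.sum_mul, ← aa_succ]
      rw [hsplit, hS3, hS1]
      ring
    push_cast
    rw [key]
    have hbound1 : |∑ m ∈ range (r+1), u m *
        (aa u (n-m) (k+1) - ((k:ℝ)+1) * ∑ j ∈ range (r-m+1), aa u j k * u ((n-m)-j))|
        ≤ C1 * |u (n-(r+1))| := by
      calc |∑ m ∈ range (r+1), u m *
          (aa u (n-m) (k+1) - ((k:ℝ)+1) * ∑ j ∈ range (r-m+1), aa u j k * u ((n-m)-j))|
          ≤ ∑ m ∈ range (r+1), |u m *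
            (aa u (n-m) (k+1) - ((k:ℝ)+1) * ∑ j ∈ range (r-m+1), aa u j k * u ((n-m)-j))| :=
            Finset.abs_sum_le_sum_abs _ _
        _ ≤ ∑ m ∈ range (r+1), |u m| * (CC (r-m) * |u (n-(r+1))|) := by
            refine Finset.sum_le_sum fun m hm => ?_
            simp only [Finset.mem_range] at hm
            rw [abs_mul]
            refine mul_le_mul_of_nonneg_left ?_ (abs_nonneg _)
            have hh := hCN (r-m) (n-m) (hNm m (by omega))
            have e5 : (n-m) - ((r-m)+1) = n - (r+1) := by omega
            rw [e5] at hh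
            exact hh
        _ = C1 * |u (n-(r+1))| := by
            rw [hC1def, Finset.sum_mul]
            exact Finset.sum_congr rfl fun m _ => by ring
    have hbound2 : |∑ m ∈ Ico (r+1) (n-r), u m * aa u (n-m) (k+1)|
        ≤ B^(k+1) * Cc * |u (n-(r+1))| := by
      calc |∑ m ∈ Ico (r+1) (n-r), u m * aa u (n-m) (k+1)|
          ≤ ∑ m ∈ Ico (r+1) (n-r), |u m * aa u (n-m) (k+1)| :=
            Finset.abs_sum_le_sum_abs _ _
        _ ≤ ∑ m ∈ Ico (r+1) (n-r), |u m| * (B^(k+1) * |u (n-m-k)|) := by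
            refine Finset.sum_le_sum fun m hm => ?_
            rw [abs_mul]
            refine mul_le_mul_of_nonneg_left ?_ (abs_nonneg _)
            exact hB k (n-m)
        _ = B^(k+1) * ∑ m ∈ Ico (r+1) (n-r), |u m| * |u (n-m-k)| := by
            rw [Finset.mul_sum]
            exact Finset.sum_congr rfl fun m _ => by ring
        _ ≤ B^(k+1) * (Cc * |u (n-(r+1))|) := by
            refine mul_le_mul_of_nonneg_left ?_ (by positivity)
            have e6 : Ico (r+1) (n-r) = Icc (r+1) (n-(r+1)) := by
              rw [← Finset.Ico_add_one_right_eq_Icc]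
              congr 1
              omega
            rw [e6]
            exact hC n hnc
        _ = B^(k+1) * Cc * |u (n-(r+1))| := by ring
    calc |(∑ m ∈ range (r+1), u m *
          (aa u (n-m) (k+1) - ((k:ℝ)+1) * ∑ j ∈ range (r-m+1), aa u j k * u ((n-m)-j)))
          + ∑ m ∈ Ico (r+1) (n-r), u m * aa u (n-m) (k+1)|
        ≤ |∑ m ∈ range (r+1), u m *
          (aa u (n-m) (k+1) - ((k:ℝ)+1) * ∑ j ∈ range (r-m+1), aa u j k * u ((n-m)-j))|
          + |∑ m ∈ Ico (r+1) (n-r), u m * aa u (n-m) (k+1)| := abs_add_le _ _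
      _ ≤ C1 * |u (n-(r+1))| + B^(k+1) * Cc * |u (n-(r+1))| := add_le_add hbound1 hbound2
      _ = (C1 + B^(k+1) * Cc) * |u (n-(r+1))| := by ring

lemma part1 (u : ℕ → ℝ) (hu0 : u 0 = 0) (hune : ∀ n, 1 ≤ n → u n ≠ 0) (hgarg : Gargantuan u) (f : ℕ → ℝ)
    (hrad : ∃ R : ℝ, 0 < R ∧ ∃ C : ℝ, ∀ k, |f k| * R ^ k ≤ C)
    (v w : ℕ → ℝ)
    (hv : ∀ n, v n = ∑ k ∈ Finset.range (n + 1), f k * aa u n k)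
    (hw : ∀ n, w n = ∑ k ∈ Finset.range (n + 1), (k + 1 : ℝ) * f (k + 1) * aa u n k) :
    ∀ r : ℕ, ∃ C : ℝ, 0 ≤ C ∧ ∃ N, ∀ n ≥ N,
      |v n - ∑ k ∈ range (r+1), w k * u (n-k)| ≤ C * |u (n-(r+1))| := by
  obtain ⟨R, hR0, Cf, hCf⟩ := hrad
  have hCf0 : 0 ≤ Cf := le_trans (by positivity) (hCf 0)
  obtain ⟨B, hB1, hB⟩ := ML u hu0 hune hgarg
  have hB0 : (0:ℝ) < B := lt_of_lt_of_le zero_lt_one hB1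
  intro r
  choose CQ hCQ0 NQ hQ using Q u hu0 hune hgarg
  set ε : ℝ := min (R/(2*B)) (1/2) with hεdef
  have hε0 : 0 < ε := lt_min (by positivity) (by norm_num)
  have hε1 : ε < 1 := lt_of_le_of_lt (min_le_right _ _) (by norm_num)
  obtain ⟨K, hK1, Nch, hch⟩ := chain u hune hgarg ε hε0 hε1
  have hK0 : (0:ℝ) ≤ K := le_trans zero_le_one hK1
  set D : ℝ := Cf * K * (B/R)^(r+2) with hDdef
  have hD0 : 0 ≤ D := by positivity
  set C2 : ℝ := ∑ k ∈ range (r+1), |f (k+1)| * CQ k r with hC2def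
  have hC20 : 0 ≤ C2 := Finset.sum_nonneg fun k _ => mul_nonneg (abs_nonneg _) (hCQ0 _ _)
  refine ⟨C2 + 2*D, by positivity,
    ((range (r+1)).sup (fun k => NQ k r)) + Nch + 2*r + 8, ?_⟩
  intro n hn
  have hn1 : 1 ≤ n := by omega
  have hnr : r + 2 ≤ n := by omega
  have hNQn : ∀ k, k ≤ r → NQ k r ≤ n := by
    intro k hk
    have h2 : NQ k r ≤ (range (r+1)).sup (fun k => NQ k r) :=
      Finset.le_sup (f := fun k => NQ k r) (Finset.mem_range.mpr (by omega : k < r+1))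
    omega
  -- algebraic decomposition of the error
  have hv' : v n = (∑ k ∈ range (r+1), f (k+1) * aa u n (k+1))
      + ∑ k ∈ Ico (r+1) n, f (k+1) * aa u n (k+1) := by
    rw [hv n, Finset.sum_range_succ']
    have h0 : aa u n 0 = 0 := by rw [aa_zero, if_neg (by omega)]
    rw [h0, mul_zero, add_zero, Finset.range_eq_Ico,
      ← Finset.sum_Ico_consecutive (fun k => f (k+1) * aa u n (k+1))
        (Nat.zero_le (r+1)) (by omega : r+1 ≤ n)]
    rw [Finset.range_eq_Ico]
  have hw' : ∑ j ∈ range (r+1), w j * u (n-j)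
      = ∑ k ∈ range (r+1), ((k:ℝ)+1) * f (k+1) * ∑ j ∈ range (r+1), aa u j k * u (n-j) := by
    have hwj : ∀ j ∈ range (r+1), w j * u (n-j)
        = ∑ k ∈ range (r+1), ((k:ℝ)+1) * f (k+1) * aa u j k * u (n-j) := by
      intro j hj
      simp only [Finset.mem_range] at hj
      have e1 : w j = ∑ k ∈ range (r+1), ((k:ℝ)+1) * f (k+1) * aa u j k := by
        rw [hw j]
        refine Finset.sum_subset (fun k hk => Finset.mem_range.mpr ?_) ?_
        · simp only [Finset.mem_range] at hk; omega
        · intro k hk hk2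
          simp only [Finset.mem_range] at hk hk2
          rw [aa_vanish u hu0 k j (by omega), mul_zero]
      rw [e1, Finset.sum_mul]
    rw [Finset.sum_congr rfl hwj, Finset.sum_comm]
    refine Finset.sum_congr rfl fun k _ => ?_
    rw [Finset.mul_sum]
    exact Finset.sum_congr rfl fun j _ => by ring
  have keyv : v n - ∑ j ∈ range (r+1), w j * u (n-j)
      = (∑ k ∈ range (r+1), f (k+1) *
          (aa u n (k+1) - ((k:ℝ)+1) * ∑ j ∈ range (r+1), aa u j k * u (n-j)))
        + ∑ k ∈ Ico (r+1) n, f (k+1) * aa u n (k+1) := by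
    rw [hv', hw']
    rw [show (∑ k ∈ range (r+1), f (k+1) *
          (aa u n (k+1) - ((k:ℝ)+1) * ∑ j ∈ range (r+1), aa u j k * u (n-j)))
        = ∑ k ∈ range (r+1), (f (k+1) * aa u n (k+1)
            - ((k:ℝ)+1) * f (k+1) * ∑ j ∈ range (r+1), aa u j k * u (n-j)) from
      Finset.sum_congr rfl fun k _ => by ring]
    rw [Finset.sum_sub_distrib]
    ring
  rw [keyv]
  -- bound the two parts
  have hb1 : |∑ k ∈ range (r+1), f (k+1) *
      (aa u n (k+1) - ((k:ℝ)+1) * ∑ j ∈ range (r+1), aa u j k * u (n-j))|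
      ≤ C2 * |u (n-(r+1))| := by
    calc |∑ k ∈ range (r+1), f (k+1) *
        (aa u n (k+1) - ((k:ℝ)+1) * ∑ j ∈ range (r+1), aa u j k * u (n-j))|
        ≤ ∑ k ∈ range (r+1), |f (k+1) *
          (aa u n (k+1) - ((k:ℝ)+1) * ∑ j ∈ range (r+1), aa u j k * u (n-j))| :=
          Finset.abs_sum_le_sum_abs _ _
      _ ≤ ∑ k ∈ range (r+1), |f (k+1)| * (CQ k r * |u (n-(r+1))|) := by
          refine Finset.sum_le_sum fun k hk => ?_
          simp only [Finset.mem_range] at hk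
          rw [abs_mul]
          exact mul_le_mul_of_nonneg_left (hQ k r n (hNQn k (by omega))) (abs_nonneg _)
      _ = C2 * |u (n-(r+1))| := by
          rw [hC2def, Finset.sum_mul]
          exact Finset.sum_congr rfl fun k _ => by ring
  have hb2 : |∑ k ∈ Ico (r+1) n, f (k+1) * aa u n (k+1)| ≤ 2*D * |u (n-(r+1))| := by
    have hterm : ∀ k ∈ Ico (r+1) n, |f (k+1) * aa u n (k+1)|
        ≤ D * (1/2:ℝ)^(k-(r+1)) * |u (n-(r+1))| := by
      intro k hk
      simp only [Finset.mem_Ico] at hk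
      have hf1 : |f (k+1)| ≤ Cf / R^(k+1) := by
        rw [div_eq_inv_mul, ← inv_mul_le_iff₀ (by positivity)]
        calc (R^(k+1))⁻¹⁻¹ * |f (k+1)| = R^(k+1) * |f (k+1)| := by rw [inv_inv]
          _ = |f (k+1)| * R^(k+1) := by ring
          _ ≤ Cf := hCf (k+1)
      have hu1 : |u (n-k)| ≤ K * ε^(k-(r+1)) * |u (n-(r+1))| := by
        have h1 := hch (n-(r+1)) (by omega) (k-(r+1)) (by omega)
        have e : (n-(r+1)) - (k-(r+1)) = n-k := by omega
        rwa [e] at h1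
      calc |f (k+1) * aa u n (k+1)| = |f (k+1)| * |aa u n (k+1)| := abs_mul _ _
        _ ≤ (Cf / R^(k+1)) * (B^(k+1) * |u (n-k)|) := by
            refine mul_le_mul hf1 (hB k n) (abs_nonneg _) (by positivity)
        _ ≤ (Cf / R^(k+1)) * (B^(k+1) * (K * ε^(k-(r+1)) * |u (n-(r+1))|)) := by
            refine mul_le_mul_of_nonneg_left ?_ (by positivity)
            exact mul_le_mul_of_nonneg_left hu1 (by positivity)
        _ = Cf * K * ((B/R)^(k+1) * ε^(k-(r+1))) * |u (n-(r+1))| := by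
            rw [div_pow]
            field_simp
        _ ≤ D * (1/2:ℝ)^(k-(r+1)) * |u (n-(r+1))| := by
            refine mul_le_mul_of_nonneg_right ?_ (abs_nonneg _)
            rw [hDdef, mul_assoc (Cf * K)]
            refine mul_le_mul_of_nonneg_left ?_ (by positivity)
            have e2 : k+1 = (r+2) + (k-(r+1)) := by omega
            rw [e2, pow_add, mul_assoc]
            refine mul_le_mul_of_nonneg_left ?_ (by positivity)
            rw [← mul_pow]
            refine pow_le_pow_left₀ (by positivity) ?_ _
            calc B/R * ε ≤ B/R * (R/(2*B)) :=
                mul_le_mul_of_nonneg_left (min_le_left _ _) (by positivity)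
              _ = 1/2 := by field_simp
      
    calc |∑ k ∈ Ico (r+1) n, f (k+1) * aa u n (k+1)|
        ≤ ∑ k ∈ Ico (r+1) n, |f (k+1) * aa u n (k+1)| := Finset.abs_sum_le_sum_abs _ _
      _ ≤ ∑ k ∈ Ico (r+1) n, D * (1/2:ℝ)^(k-(r+1)) * |u (n-(r+1))| :=
          Finset.sum_le_sum hterm
      _ = D * |u (n-(r+1))| * ∑ k ∈ Ico (r+1) n, (1/2:ℝ)^(k-(r+1)) := by
          rw [Finset.mul_sum]
          exact Finset.sum_congr rfl fun k _ => by ring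
      _ ≤ D * |u (n-(r+1))| * 2 := by
          refine mul_le_mul_of_nonneg_left ?_ (by positivity)
          rw [Finset.sum_Ico_eq_sum_range]
          have e3 : ∀ i ∈ range (n-(r+1)), (1/2:ℝ)^(r+1+i-(r+1)) = (1/2:ℝ)^i := by
            intro i _
            congr 1
            omega
          rw [Finset.sum_congr rfl e3]
          rw [geom_sum_eq (by norm_num : (1/2:ℝ) ≠ 1) (n-(r+1))]
          have hp : (0:ℝ) ≤ (1/2:ℝ)^(n-(r+1)) := by positivity
          have he : ((1/2:ℝ)^(n-(r+1)) - 1)/((1/2:ℝ)-1) = 2*(1-(1/2:ℝ)^(n-(r+1))) := by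
            field_simp
            ring
          rw [he]
          linarith
      _ = 2*D * |u (n-(r+1))| := by ring
  calc |(∑ k ∈ range (r+1), f (k+1) *
        (aa u n (k+1) - ((k:ℝ)+1) * ∑ j ∈ range (r+1), aa u j k * u (n-j)))
        + ∑ k ∈ Ico (r+1) n, f (k+1) * aa u n (k+1)|
      ≤ |∑ k ∈ range (r+1), f (k+1) *
          (aa u n (k+1) - ((k:ℝ)+1) * ∑ j ∈ range (r+1), aa u j k * u (n-j))|
        + |∑ k ∈ Ico (r+1) n, f (k+1) * aa u n (k+1)| := abs_add_le _ _
    _ ≤ C2 * |u (n-(r+1))| + 2*D * |u (n-(r+1))| := add_le_add hb1 hb2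
    _ = (C2 + 2*D) * |u (n-(r+1))| := by ring

lemma part2B (u : ℕ → ℝ) (hune : ∀ n, 1 ≤ n → u n ≠ 0) (hgarg : Gargantuan u)
    (v : ℕ → ℝ) (m : ℕ) (wm : ℝ) (hwm : wm ≠ 0)
    (C : ℝ) (hC0 : 0 ≤ C) (N₀ : ℕ)
    (happ : ∀ n ≥ N₀, |v n - wm * u (n-m)| ≤ C * |u (n-(m+1))|) :
    Gargantuan v := by
  have hwm0 : 0 < |wm| := abs_pos.mpr hwm
  obtain ⟨N₁, hN11, hN1⟩ := G1' u hune hgarg (|wm|/(2*(C+1))) (by positivity)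
  set Nv := N₀ + N₁ + m + 2 with hNv
  have hcomp : ∀ n ≥ Nv, |wm|/2 * |u (n-m)| ≤ |v n| ∧ |v n| ≤ (3/2*|wm|) * |u (n-m)| := by
    intro n hn
    have h1 := happ n (by omega)
    have h2 : |u (n-(m+1))| ≤ |wm|/(2*(C+1)) * |u (n-m)| := by
      have h2' := hN1 (n-m) (by omega)
      have e : (n-m)-1 = n-(m+1) := by omega
      rwa [e] at h2'
    have h4 : C * (|wm|/(2*(C+1))) ≤ |wm|/2 := by
      rw [mul_div_assoc', div_le_div_iff₀ (by positivity) (by norm_num)]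
      nlinarith
    have h3 : |v n - wm * u (n-m)| ≤ |wm|/2 * |u (n-m)| := by
      calc |v n - wm * u (n-m)| ≤ C * |u (n-(m+1))| := h1
        _ ≤ C * (|wm|/(2*(C+1)) * |u (n-m)|) := mul_le_mul_of_nonneg_left h2 hC0
        _ = (C * (|wm|/(2*(C+1)))) * |u (n-m)| := by ring
        _ ≤ |wm|/2 * |u (n-m)| := mul_le_mul_of_nonneg_right h4 (abs_nonneg _)
    have h5 : |wm * u (n-m)| - |v n - wm * u (n-m)| ≤ |v n| := by
      have h5' := abs_sub_abs_le_abs_sub (wm * u (n-m)) (v n)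
      rw [abs_sub_comm] at h5'
      linarith
    have h6 : |v n| ≤ |wm * u (n-m)| + |v n - wm * u (n-m)| := by
      calc |v n| = |wm * u (n-m) + (v n - wm * u (n-m))| := by
            rw [show wm * u (n-m) + (v n - wm * u (n-m)) = v n from by ring]
        _ ≤ |wm * u (n-m)| + |v n - wm * u (n-m)| := abs_add_le _ _
    rw [abs_mul] at h5 h6
    constructor
    · linarith
    · linarith
  constructor
  · -- ratio tends to zero
    have hg : Tendsto (fun n => 3 * |u (n-m-1) / u (n-m)|) atTop (nhds 0) := by
      have h7 : Tendsto (fun t => u (t-1) / u t) atTop (nhds 0) := hgarg.1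
      have h8 : Tendsto (fun n : ℕ => n - m) atTop atTop :=
        tendsto_sub_atTop_nat m
      have h9 := (h7.comp h8).abs
      rw [abs_zero] at h9
      have h10 := h9.const_mul (3:ℝ)
      rw [mul_zero] at h10
      simpa [Function.comp] using h10
    refine squeeze_zero_norm' ?_ hg
    filter_upwards [eventually_ge_atTop (Nv + m + Nv + 4)] with n hn
    have hc1 := hcomp n (by omega)
    have hc2 := hcomp (n-1) (by omega)
    have hY : (0:ℝ) < |u (n-m)| := abs_pos.mpr (hune (n-m) (by omega))
    have hvn : (0:ℝ) < |v n| := lt_of_lt_of_le (by positivity) hc1.1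
    have e1 : n-1-m = n-m-1 := by omega
    rw [e1] at hc2
    have h11 : |v (n-1)|/|v n| ≤ ((3/2*|wm|) * |u (n-m-1)|)/((|wm|/2) * |u (n-m)|) :=
      div_le_div₀ (by positivity) hc2.2 (by positivity) hc1.1
    have h12 : ((3/2*|wm|) * |u (n-m-1)|)/((|wm|/2) * |u (n-m)|)
        = 3 * (|u (n-m-1)|/|u (n-m)|) := by
      field_simp
    rw [Real.norm_eq_abs, abs_div]
    rw [h12] at h11
    calc |v (n-1)|/|v n| ≤ 3 * (|u (n-m-1)|/|u (n-m)|) := h11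
      _ = 3 * |u (n-m-1)/u (n-m)| := by rw [abs_div]
  · -- convolution condition
    intro r hr
    obtain ⟨K, hK1, Nch, hch⟩ := chain u hune hgarg (1/2) (by norm_num) (by norm_num)
    have hK0 : (0:ℝ) ≤ K := le_trans zero_le_one hK1
    set T := Nv + m + r + 2 with hT
    obtain ⟨A₂, hA20, N₂, hA2⟩ := G2' u hgarg (T - m) (by omega)
    set Mv : ℝ := ∑ j ∈ range T, |v j| with hMv
    have hMv0 : 0 ≤ Mv := Finset.sum_nonneg fun j _ => abs_nonneg _
    set Cu : ℝ := 3/2*|wm| with hCu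
    have hCu0 : 0 ≤ Cu := by positivity
    set cl : ℝ := |wm|/2 with hcl
    have hcl0 : 0 < cl := by positivity
    set Ctot : ℝ := (T:ℝ)*Mv*Cu*K + Cu^2*A₂*K + (T:ℝ)*Mv*Cu*K with hCtot
    rw [isBigO_iff]
    refine ⟨Ctot / cl, ?_⟩
    filter_upwards [eventually_ge_atTop (N₂ + Nch + 2*T + 2*m + 2*r + 8)] with n hn
    have habs : ∑ k ∈ Icc r (n-r), |v k * v (n-k)|
        = ∑ k ∈ Icc r (n-r), |v k| * |v (n-k)| :=
      Finset.sum_congr rfl fun k _ => abs_mul _ _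
    have h13 : r ≤ T := by omega
    have h14 : T ≤ n-T+1 := by omega
    have h15 : n-T+1 ≤ n-r+1 := by omega
    have hsplit : ∑ k ∈ Icc r (n-r), |v k| * |v (n-k)|
        = (∑ k ∈ Ico r T, |v k| * |v (n-k)|)
          + (∑ k ∈ Ico T (n-T+1), |v k| * |v (n-k)|)
          + ∑ k ∈ Ico (n-T+1) (n-r+1), |v k| * |v (n-k)| := by
      rw [show n-r+1 = (n-r)+1 from rfl, ← Finset.Ico_add_one_right_eq_Icc,
        ← Finset.sum_Ico_consecutive (fun k => |v k| * |v (n-k)|) h13 (by omega : T ≤ (n-r)+1),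
        ← Finset.sum_Ico_consecutive (fun k => |v k| * |v (n-k)|) h14 h15,
        ← add_assoc]
    have hP1 : ∑ k ∈ Ico r T, |v k| * |v (n-k)| ≤ (T:ℝ)*Mv*Cu*K * |u (n-r-m)| := by
      have hterm : ∀ k ∈ Ico r T, |v k| * |v (n-k)| ≤ Mv * (Cu * (K * |u (n-r-m)|)) := by
        intro k hk
        simp only [Finset.mem_Ico] at hk
        have hb1 : |v k| ≤ Mv :=
          Finset.single_le_sum (f := fun j => |v j|) (fun j _ => abs_nonneg _)
            (Finset.mem_range.mpr hk.2)
        have hb2 : |v (n-k)| ≤ Cu * |u (n-k-m)| := (hcomp (n-k) (by omega)).2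
        have hb3 : |u (n-k-m)| ≤ K * |u (n-r-m)| := by
          have hc := hch (n-r-m) (by omega) (k-r) (by omega)
          have e : (n-r-m)-(k-r) = n-k-m := by omega
          rw [e] at hc
          calc |u (n-k-m)| ≤ K * (1/2:ℝ)^(k-r) * |u (n-r-m)| := hc
            _ ≤ K * 1 * |u (n-r-m)| := by
                refine mul_le_mul_of_nonneg_right ?_ (abs_nonneg _)
                exact mul_le_mul_of_nonneg_left
                  (pow_le_one₀ (by norm_num) (by norm_num)) hK0
            _ = K * |u (n-r-m)| := by ring
        have hb4 : |v (n-k)| ≤ Cu * (K * |u (n-r-m)|) :=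
          le_trans hb2 (mul_le_mul_of_nonneg_left hb3 hCu0)
        exact mul_le_mul hb1 hb4 (abs_nonneg _) hMv0
      calc ∑ k ∈ Ico r T, |v k| * |v (n-k)|
          ≤ (Ico r T).card • (Mv * (Cu * (K * |u (n-r-m)|))) :=
            Finset.sum_le_card_nsmul _ _ _ hterm
        _ = ((T - r : ℕ):ℝ) * (Mv * (Cu * (K * |u (n-r-m)|))) := by
            rw [Nat.card_Ico, nsmul_eq_mul]
        _ ≤ (T:ℝ) * (Mv * (Cu * (K * |u (n-r-m)|))) := by
            refine mul_le_mul_of_nonneg_right ?_ (by positivity)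
            exact_mod_cast Nat.cast_le.mpr (by omega : T - r ≤ T)
        _ = (T:ℝ)*Mv*Cu*K * |u (n-r-m)| := by ring
    have hP3 : ∑ k ∈ Ico (n-T+1) (n-r+1), |v k| * |v (n-k)|
        ≤ (T:ℝ)*Mv*Cu*K * |u (n-r-m)| := by
      have hterm : ∀ k ∈ Ico (n-T+1) (n-r+1),
          |v k| * |v (n-k)| ≤ (Cu * (K * |u (n-r-m)|)) * Mv := by
        intro k hk
        simp only [Finset.mem_Ico] at hk
        have hb1 : |v (n-k)| ≤ Mv :=
          Finset.single_le_sum (f := fun j => |v j|) (fun j _ => abs_nonneg _)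
            (Finset.mem_range.mpr (by omega))
        have hb2 : |v k| ≤ Cu * |u (k-m)| := (hcomp k (by omega)).2
        have hb3 : |u (k-m)| ≤ K * |u (n-r-m)| := by
          have hc := hch (n-r-m) (by omega) ((n-r-m)-(k-m)) (by omega)
          have e : (n-r-m)-((n-r-m)-(k-m)) = k-m := by omega
          rw [e] at hc
          calc |u (k-m)| ≤ K * (1/2:ℝ)^((n-r-m)-(k-m)) * |u (n-r-m)| := hc
            _ ≤ K * 1 * |u (n-r-m)| := by
                refine mul_le_mul_of_nonneg_right ?_ (abs_nonneg _)
                exact mul_le_mul_of_nonneg_left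
                  (pow_le_one₀ (by norm_num) (by norm_num)) hK0
            _ = K * |u (n-r-m)| := by ring
        have hb4 : |v k| ≤ Cu * (K * |u (n-r-m)|) :=
          le_trans hb2 (mul_le_mul_of_nonneg_left hb3 hCu0)
        exact mul_le_mul hb4 hb1 (abs_nonneg _) (by positivity)
      calc ∑ k ∈ Ico (n-T+1) (n-r+1), |v k| * |v (n-k)|
          ≤ (Ico (n-T+1) (n-r+1)).card • ((Cu * (K * |u (n-r-m)|)) * Mv) :=
            Finset.sum_le_card_nsmul _ _ _ hterm
        _ = (((n-r+1) - (n-T+1) : ℕ):ℝ) * ((Cu * (K * |u (n-r-m)|)) * Mv) := by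
            rw [Nat.card_Ico, nsmul_eq_mul]
        _ ≤ (T:ℝ) * ((Cu * (K * |u (n-r-m)|)) * Mv) := by
            refine mul_le_mul_of_nonneg_right ?_ (by positivity)
            exact_mod_cast Nat.cast_le.mpr (by omega : (n-r+1) - (n-T+1) ≤ T)
        _ = (T:ℝ)*Mv*Cu*K * |u (n-r-m)| := by ring
    have hP2 : ∑ k ∈ Ico T (n-T+1), |v k| * |v (n-k)|
        ≤ Cu^2*A₂*K * |u (n-r-m)| := by
      have hterm : ∀ k ∈ Ico T (n-T+1),
          |v k| * |v (n-k)| ≤ Cu^2 * (|u (k-m)| * |u (n-k-m)|) := by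
        intro k hk
        simp only [Finset.mem_Ico] at hk
        have hb2 : |v k| ≤ Cu * |u (k-m)| := (hcomp k (by omega)).2
        have hb2' : |v (n-k)| ≤ Cu * |u (n-k-m)| := (hcomp (n-k) (by omega)).2
        calc |v k| * |v (n-k)| ≤ (Cu * |u (k-m)|) * (Cu * |u (n-k-m)|) :=
              mul_le_mul hb2 hb2' (abs_nonneg _) (by positivity)
          _ = Cu^2 * (|u (k-m)| * |u (n-k-m)|) := by ring
      have hre : ∑ k ∈ Ico T (n-T+1), |u (k-m)| * |u (n-k-m)|
          = ∑ i ∈ Ico (T-m) (n-T+1-m), |u i| * |u ((n-2*m)-i)| := by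
        refine Finset.sum_nbij' (i := fun k => k - m) (j := fun i => i + m)
          ?_ ?_ ?_ ?_ ?_
        · intro k hk
          simp only [Finset.mem_Ico] at hk
          simp only [Finset.mem_Ico]
          omega
        · intro i hi
          simp only [Finset.mem_Ico] at hi
          simp only [Finset.mem_Ico]
          omega
        · intro k hk
          simp only [Finset.mem_Ico] at hk
          omega
        · intro i hi
          simp only [Finset.mem_Ico] at hi
          omega
        · intro k hk
          simp only [Finset.mem_Ico] at hk
          have e : (n-2*m)-(k-m) = n-k-m := by omega
          rw [e]
      have hG2 : ∑ i ∈ Ico (T-m) (n-T+1-m), |u i| * |u ((n-2*m)-i)|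
          ≤ A₂ * |u (n-m-T)| := by
        have e0 : Ico (T-m) (n-T+1-m) = Icc (T-m) ((n-2*m)-(T-m)) := by
          rw [← Finset.Ico_add_one_right_eq_Icc]
          congr 1
          omega
        have e1 : ∑ i ∈ Icc (T-m) ((n-2*m)-(T-m)), |u i| * |u ((n-2*m)-i)|
            = ∑ i ∈ Icc (T-m) ((n-2*m)-(T-m)), |u i * u ((n-2*m)-i)| :=
          Finset.sum_congr rfl fun i _ => (abs_mul _ _).symm
        rw [e0, e1]
        have h16 := hA2 (n-2*m) (by omega)
        have e2 : (n-2*m)-(T-m) = n-m-T := by omega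
        calc ∑ i ∈ Icc (T-m) ((n-2*m)-(T-m)), |u i * u ((n-2*m)-i)|
            ≤ A₂ * |u ((n-2*m)-(T-m))| := h16
          _ = A₂ * |u (n-m-T)| := by rw [e2]
      have hfin : |u (n-m-T)| ≤ K * |u (n-r-m)| := by
        have hc := hch (n-r-m) (by omega) (T-r) (by omega)
        have e : (n-r-m)-(T-r) = n-m-T := by omega
        rw [e] at hc
        calc |u (n-m-T)| ≤ K * (1/2:ℝ)^(T-r) * |u (n-r-m)| := hc
          _ ≤ K * 1 * |u (n-r-m)| := by
              refine mul_le_mul_of_nonneg_right ?_ (abs_nonneg _)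
              exact mul_le_mul_of_nonneg_left
                (pow_le_one₀ (by norm_num) (by norm_num)) hK0
          _ = K * |u (n-r-m)| := by ring
      calc ∑ k ∈ Ico T (n-T+1), |v k| * |v (n-k)|
          ≤ ∑ k ∈ Ico T (n-T+1), Cu^2 * (|u (k-m)| * |u (n-k-m)|) :=
            Finset.sum_le_sum hterm
        _ = Cu^2 * ∑ k ∈ Ico T (n-T+1), |u (k-m)| * |u (n-k-m)| := by
            rw [Finset.mul_sum]
        _ = Cu^2 * ∑ i ∈ Ico (T-m) (n-T+1-m), |u i| * |u ((n-2*m)-i)| := by rw [hre]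
        _ ≤ Cu^2 * (A₂ * |u (n-m-T)|) := mul_le_mul_of_nonneg_left hG2 (by positivity)
        _ ≤ Cu^2 * (A₂ * (K * |u (n-r-m)|)) := by
            refine mul_le_mul_of_nonneg_left ?_ (by positivity)
            exact mul_le_mul_of_nonneg_left hfin hA20
        _ = Cu^2*A₂*K * |u (n-r-m)| := by ring
    have htot : ∑ k ∈ Icc r (n-r), |v k * v (n-k)| ≤ Ctot * |u (n-r-m)| := by
      rw [habs, hsplit, hCtot]
      have := add_le_add (add_le_add hP1 hP2) hP3
      calc (∑ k ∈ Ico r T, |v k| * |v (n-k)|)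
          + (∑ k ∈ Ico T (n-T+1), |v k| * |v (n-k)|)
          + ∑ k ∈ Ico (n-T+1) (n-r+1), |v k| * |v (n-k)|
          ≤ (T:ℝ)*Mv*Cu*K * |u (n-r-m)| + Cu^2*A₂*K * |u (n-r-m)|
            + (T:ℝ)*Mv*Cu*K * |u (n-r-m)| := this
        _ = ((T:ℝ)*Mv*Cu*K + Cu^2*A₂*K + (T:ℝ)*Mv*Cu*K) * |u (n-r-m)| := by ring
    have hlow : cl * |u (n-r-m)| ≤ |v (n-r)| := by
      have := (hcomp (n-r) (by omega)).1
      exact this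
    have hCtot0 : 0 ≤ Ctot := by
      rw [hCtot]; positivity
    rw [Real.norm_eq_abs, Real.norm_eq_abs,
      abs_of_nonneg (Finset.sum_nonneg fun k _ => abs_nonneg (v k * v (n-k)))]
    calc ∑ k ∈ Icc r (n-r), |v k * v (n-k)| ≤ Ctot * |u (n-r-m)| := htot
      _ ≤ Ctot * (|v (n-r)| / cl) := by
          refine mul_le_mul_of_nonneg_left ?_ hCtot0
          rw [le_div_iff₀ hcl0]
          calc |u (n-r-m)| * cl = cl * |u (n-r-m)| := by ring
            _ ≤ |v (n-r)| := hlow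
      _ = Ctot / cl * |v (n-r)| := by ring

/-- Bender's theorem. -/
theorem bender
    (u : ℕ → ℝ) (hu0 : u 0 = 0) (hune : ∀ n, 1 ≤ n → u n ≠ 0)
    (hgarg : Gargantuan u)
    (f : ℕ → ℝ)
    (hrad : ∃ R : ℝ, 0 < R ∧ ∃ C : ℝ, ∀ k, |f k| * R ^ k ≤ C)
    (v w : ℕ → ℝ)
    (hv : ∀ n, v n = ∑ k ∈ Finset.range (n + 1),
      f k * PowerSeries.coeff (R := ℝ) n ((PowerSeries.mk u) ^ k))
    (hw : ∀ n, w n = ∑ k ∈ Finset.range (n + 1),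
      (k + 1 : ℝ) * f (k + 1) * PowerSeries.coeff (R := ℝ) n ((PowerSeries.mk u) ^ k)) :
    (∀ r : ℕ,
      (fun n => v n - ∑ k ∈ Finset.range (r + 1), w k * u (n - k))
        =O[atTop] fun n => u (n - (r + 1))) ∧ Gargantuan v := by
  classical
  have hva : ∀ n, v n = ∑ k ∈ Finset.range (n + 1), f k * aa u n k := hv
  have hwa : ∀ n, w n = ∑ k ∈ Finset.range (n + 1), (k + 1 : ℝ) * f (k + 1) * aa u n k := hw
  have P1 := part1 u hu0 hune hgarg f hrad v w hva hwa
  constructor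
  · intro r
    obtain ⟨C, hC0, N, hN⟩ := P1 r
    rw [isBigO_iff]
    refine ⟨C, eventually_atTop.mpr ⟨N, fun n hn => ?_⟩⟩
    simpa [Real.norm_eq_abs] using hN n hn
  · by_cases hW : ∀ j, w j = 0
    · -- degenerate case: v vanishes for n ≥ 1
      have hu1 : u 1 ≠ 0 := hune 1 le_rfl
      have hf : ∀ k, f (k+1) = 0 := by
        intro k
        induction k using Nat.strong_induction_on with
        | _ k ihk =>
          have h1 : w k = ((k:ℝ)+1) * f (k+1) * aa u k k := by
            rw [hwa k, Finset.sum_eq_single k]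
            · intro j hj hjk
              simp only [Finset.mem_range] at hj
              rw [ihk j (by omega)]
              ring
            · intro h; exact absurd (Finset.mem_range.mpr (by omega)) h
          rw [hW k, aa_diag u hu0 k] at h1
          have hk1 : ((k:ℝ)+1) ≠ 0 := by positivity
          have hpk : u 1 ^ k ≠ 0 := pow_ne_zero _ hu1
          have h2 := h1.symm
          rcases mul_eq_zero.mp h2 with h | h
          · rcases mul_eq_zero.mp h with h' | h'
            · exact absurd h' hk1
            · exact h'
          · exact absurd h hpk
      have hv0 : ∀ n, 1 ≤ n → v n = 0 := by
        intro n hn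
        rw [hva n]
        refine Finset.sum_eq_zero fun k _ => ?_
        match k with
        | 0 =>
          rw [aa_zero, if_neg (by omega), mul_zero]
        | (k+1) =>
          rw [hf k, zero_mul]
      constructor
      · have hEq : (fun n => v (n-1) / v n) =ᶠ[atTop] fun _ => (0:ℝ) := by
          filter_upwards [eventually_ge_atTop 2] with n hn
          rw [hv0 (n-1) (by omega), zero_div]
        rw [tendsto_congr' hEq]
        exact tendsto_const_nhds
      · intro r hr
        have hz : ∀ n, ∑ k ∈ Icc r (n-r), |v k * v (n-k)| = 0 := by
          intro n
          refine Finset.sum_eq_zero fun k hk => ?_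
          simp only [Finset.mem_Icc] at hk
          rw [hv0 k (by omega), zero_mul, abs_zero]
        rw [isBigO_iff]
        refine ⟨0, Eventually.of_forall fun n => ?_⟩
        rw [hz n]
        simp
    · push_neg at hW
      set m := Nat.find hW with hm
      have hwm : w m ≠ 0 := Nat.find_spec hW
      have hwlt : ∀ j, j < m → w j = 0 := by
        intro j hj
        by_contra h
        exact (Nat.find_min hW hj) h
      obtain ⟨C, hC0, N, hN⟩ := P1 m
      have happ : ∀ n ≥ N, |v n - w m * u (n-m)| ≤ C * |u (n-(m+1))| := by
        intro n hn
        have e : ∑ k ∈ Finset.range (m+1), w k * u (n-k) = w m * u (n-m) := by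
          rw [Finset.sum_eq_single m]
          · intro j hj hjm
            simp only [Finset.mem_range] at hj
            rw [hwlt j (by omega), zero_mul]
          · intro h; exact absurd (Finset.mem_range.mpr (by omega)) h
        have h := hN n hn
        rwa [e] at h
      exact part2B u hune hgarg v m (w m) hwm C hC0 N happ
end

section
/- Define c_n by the identity in ℝ[[X]]: Σ_{n≥0} 4^{C(n,2)} X^n/n! = exp(Σ_{n≥1} c_n X^n/n!), and define it_k(3) by Σ_{k≥1} it_k(3) X^k/k! = 1 − (Σ_{n≥0} 4^{C(n,2)} X^n/n!)^{−1}. Then for every integer r ≥ 0, as n → ∞, c_n/4^{C(n,2)} = 1 − Σ_{k=1}^{r} it_k(3)·C(n,k)·4^{k(k+1)/2}/4^{kn} + O(n^{r+1}/4^{(r+1)n}). -/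
open Filter Asymptotics Finset

section Aux
open PowerSeries
noncomputable def uu (n : ℕ) : ℝ := 4 ^ (n.choose 2) / n.factorial
lemma uu_pos (n : ℕ) : 0 < uu n := by unfold uu; positivity
lemma uu_zero : uu 0 = 1 := by simp [uu]
lemma chooseTwo_add (l m : ℕ) : (l + m).choose 2 = l.choose 2 + m.choose 2 + l * m := by
  induction m with
  | zero => simp
  | succ m ih =>
      have h1 : (l + (m+1)) = (l + m) + 1 := by ring
      have h2 : ∀ t : ℕ, (t+1).choose 2 = t + t.choose 2 := by
        intro t; rw [Nat.choose_succ_succ]; simp [Nat.choose_one_right]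
      rw [h1, h2, ih, h2]; ring
lemma uu_mul_uu {l n : ℕ} (h : l ≤ n) :
    uu l * uu (n - l) = (n.choose l : ℝ) * uu n / 4 ^ (l * (n - l)) := by
  have hln : l + (n - l) = n := Nat.add_sub_cancel' h
  have hch : n.choose 2 = l.choose 2 + (n-l).choose 2 + l * (n - l) := by
    conv_lhs => rw [← hln]; exact chooseTwo_add l (n - l)
  have hfac : ((n.choose l : ℝ)) * (l.factorial : ℝ) * ((n-l).factorial : ℝ) = n.factorial := by
    exact_mod_cast congrArg (Nat.cast (R := ℝ)) (Nat.choose_mul_factorial_mul_factorial h)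
  unfold uu
  rw [hch, pow_add, pow_add]
  have h1 : (l.factorial:ℝ) ≠ 0 := by positivity
  have h2 : ((n-l).factorial:ℝ) ≠ 0 := by positivity
  have h3 : ((n.factorial:ℝ)) ≠ 0 := by positivity
  have h4 : (4:ℝ) ^ (l*(n-l)) ≠ 0 := by positivity
  field_simp
  rw [← hfac]; ring
lemma term_bound {l n c q : ℕ} (hln : l ≤ n) (hch : n.choose l ≤ c) (hq : q ≤ l * (n - l)) :
    uu l * uu (n - l) ≤ (c : ℝ) * uu n / 4 ^ q := by
  rw [uu_mul_uu hln]
  have h2 : (n.choose l : ℝ) ≤ (c:ℝ) := by exact_mod_cast hch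
  have hA : (0:ℝ) ≤ (c:ℝ) * uu n := mul_nonneg (Nat.cast_nonneg c) (uu_pos n).le
  have h3 : (0:ℝ) < (4:ℝ)^q := by positivity
  have h1 : (4:ℝ)^q ≤ 4^(l*(n-l)) := pow_le_pow_right₀ (by norm_num) hq
  exact div_le_div₀ hA (mul_le_mul_of_nonneg_right h2 (uu_pos n).le) h3 h1

lemma conv_bound (r : ℕ) : ∀ n : ℕ, 1 ≤ n →
    ∑ l ∈ Ioc r (n - (r+1)), uu l * uu (n - l)
      ≤ (2 * 4^((r+1)*(r+1)) + 4^((r+2)*(r+2))) * ((n:ℝ)^(r+1) / 4^((r+1)*n)) * uu n := by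
  intro n hn
  have hupos := uu_pos n
  have hφpos : (0:ℝ) < (n:ℝ)^(r+1) / 4^((r+1)*n) := by positivity
  set φ : ℝ := (n:ℝ)^(r+1) / 4^((r+1)*n) with hφ
  set K : ℝ := 2 * 4^((r+1)*(r+1)) + 4^((r+2)*(r+2)) with hK
  have hKpos : (0:ℝ) < K := by rw [hK]; positivity
  by_cases hsmall : n < 2*(r+1)
  · have he : Ioc r (n-(r+1)) = ∅ := by
      apply Finset.Ioc_eq_empty; omega
    rw [he, Finset.sum_empty]
    exact le_of_lt (mul_pos (mul_pos hKpos hφpos) hupos)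
  · push_neg at hsmall
    -- edge bound
    have hedge : ∀ l, l ≤ n → n.choose l ≤ n^(r+1) → (r+1) * (n - (r+1)) ≤ l * (n - l) →
        uu l * uu (n - l) ≤ 4^((r+1)*(r+1)) * φ * uu n := by
      intro l h1 h2 h3
      refine (term_bound (c := n^(r+1)) (q := (r+1)*(n-(r+1))) h1 h2 h3).trans (le_of_eq ?_)
      have hexp : (r+1)*(n-(r+1)) + (r+1)*(r+1) = (r+1)*n := by
        rw [← Nat.mul_add]; congr 1; omega
      rw [hφ, show ((4:ℝ))^((r+1)*n) = 4^((r+1)*(n-(r+1))) * 4^((r+1)*(r+1)) by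
        rw [← pow_add, hexp]]
      have h4 : ((4:ℝ))^((r+1)*(n-(r+1))) ≠ 0 := by positivity
      have h5 : ((4:ℝ))^((r+1)*(r+1)) ≠ 0 := by positivity
      push_cast
      field_simp
    -- interior bound
    have hint : ∀ l ∈ Ioc (r+1) (n-(r+2)), uu l * uu (n-l)
        ≤ ((2:ℝ)^n) * uu n / 4^((r+2)*(n-(r+2))) := by
      intro l hl
      rw [Finset.mem_Ioc] at hl
      have h1 : l ≤ n := by omega
      have h2 : n.choose l ≤ 2^n := by
        calc n.choose l ≤ n.choose (n/2) := Nat.choose_le_middle l n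
          _ ≤ ∑ i ∈ range (n+1), n.choose i :=
              Finset.single_le_sum (f := fun i => n.choose i) (fun i _ => Nat.zero_le _)
                (Finset.mem_range.2 (by omega))
          _ = 2^n := Nat.sum_range_choose n
      have h3 : (r+2)*(n-(r+2)) ≤ l * (n - l) := by
        obtain ⟨a, ha⟩ : ∃ a, l = (r+2) + a := ⟨l - (r+2), by omega⟩
        obtain ⟨b, hb⟩ : ∃ b, n - l = (r+2) + b := ⟨(n-l) - (r+2), by omega⟩
        have hnr : n - (r+2) = (r+2) + a + b := by omega
        rw [hnr, hb, ha]
        nlinarith [Nat.zero_le (a*b)]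
      have := term_bound h1 h2 h3
      rw [Nat.cast_pow] at this
      exact_mod_cast this
    -- interior sum bound
    have hintsum : ∑ l ∈ Ioc (r+1) (n-(r+2)), uu l * uu (n-l) ≤ 4^((r+2)*(r+2)) * φ * uu n := by
      have hmain : (n:ℝ) * ((2:ℝ)^n * uu n / 4^((r+2)*(n-(r+2)))) ≤ 4^((r+2)*(r+2)) * φ * uu n := by
        have hexp : (r+2)*(n-(r+2)) + (r+2)*(r+2) = (r+2)*n := by
          rw [← Nat.mul_add]; congr 1; omega
        have h4 : ((4:ℝ))^((r+2)*n) = 4^((r+2)*(n-(r+2))) * 4^((r+2)*(r+2)) := by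
          rw [← pow_add, hexp]
        have h6 : (0:ℝ) < (4:ℝ)^((r+2)*(n-(r+2))) := by positivity
        have key : (n:ℝ) * 2^n * 4^((r+1)*n) ≤ (n:ℝ)^(r+1) * 4^((r+2)*n) := by
          have h7 : (n:ℝ) ≤ 2^n := by exact_mod_cast (Nat.lt_two_pow_self (n := n)).le
          have hn2 : (n:ℝ) * 2^n ≤ 4^n := by
            calc (n:ℝ) * 2^n ≤ (2:ℝ)^n * 2^n := mul_le_mul_of_nonneg_right h7 (by positivity)
              _ = 4^n := by rw [← mul_pow]; norm_num
          have hn3 : (1:ℝ) ≤ (n:ℝ)^(r+1) := one_le_pow₀ (by exact_mod_cast hn)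
          calc (n:ℝ) * 2^n * 4^((r+1)*n) ≤ 4^n * 4^((r+1)*n) :=
                mul_le_mul_of_nonneg_right hn2 (by positivity)
            _ = 4^((r+2)*n) := by rw [← pow_add]; congr 1; ring
            _ ≤ (n:ℝ)^(r+1) * 4^((r+2)*n) := le_mul_of_one_le_left (by positivity) hn3
        rw [hφ]
        rw [show (n:ℝ) * ((2:ℝ)^n * uu n / 4^((r+2)*(n-(r+2))))
            = ((n:ℝ) * 2^n / 4^((r+2)*(n-(r+2)))) * uu n by ring,
          show (4:ℝ)^((r+2)*(r+2)) * ((n:ℝ)^(r+1) / 4^((r+1)*n)) * uu n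
            = (4^((r+2)*(r+2)) * (n:ℝ)^(r+1) / 4^((r+1)*n)) * uu n by ring]
        apply mul_le_mul_of_nonneg_right _ hupos.le
        rw [div_le_div_iff₀ h6 (by positivity)]
        calc (n:ℝ) * 2^n * 4^((r+1)*n) ≤ (n:ℝ)^(r+1) * 4^((r+2)*n) := key
          _ = (n:ℝ)^(r+1) * (4^((r+2)*(n-(r+2))) * 4^((r+2)*(r+2))) := by rw [← h4]
          _ = 4^((r+2)*(r+2)) * (n:ℝ)^(r+1) * 4^((r+2)*(n-(r+2))) := by ring
      calc ∑ l ∈ Ioc (r+1) (n-(r+2)), uu l * uu (n-l)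
          ≤ ∑ _l ∈ Ioc (r+1) (n-(r+2)), ((2:ℝ)^n) * uu n / 4^((r+2)*(n-(r+2))) :=
            Finset.sum_le_sum hint
        _ = ((Ioc (r+1) (n-(r+2))).card : ℝ) * (((2:ℝ)^n) * uu n / 4^((r+2)*(n-(r+2)))) := by
            rw [Finset.sum_const, nsmul_eq_mul]
        _ ≤ (n:ℝ) * (((2:ℝ)^n) * uu n / 4^((r+2)*(n-(r+2)))) := by
            apply mul_le_mul_of_nonneg_right _ (by positivity)
            have : (Ioc (r+1) (n-(r+2))).card ≤ n := by rw [Nat.card_Ioc]; omega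
            exact_mod_cast this
        _ ≤ 4^((r+2)*(r+2)) * φ * uu n := hmain
    -- nonnegativity of sums of uu-products
    have hnn : ∀ s : Finset ℕ, (0:ℝ) ≤ ∑ l ∈ s, uu l * uu (n-l) :=
      fun s => Finset.sum_nonneg fun l _ => (mul_pos (uu_pos l) (uu_pos (n-l))).le
    have hepos : (0:ℝ) < 4^((r+1)*(r+1)) * φ * uu n := by
      apply mul_pos (mul_pos _ hφpos) hupos; positivity
    have he1 : uu (r+1) * uu (n-(r+1)) ≤ 4^((r+1)*(r+1)) * φ * uu n :=
      hedge (r+1) (by omega) (Nat.choose_le_pow n (r+1)) (by omega)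
    rcases eq_or_lt_of_le hsmall with heq | hgt
    · -- n = 2(r+1)
      have h2 : Ioc r (n-(r+1)) = {r+1} := by
        rw [show n - (r+1) = r+1 by omega]
        exact Nat.Ioc_succ_singleton r
      rw [h2, Finset.sum_singleton]
      have : K * φ * uu n = 2 * (4^((r+1)*(r+1)) * φ * uu n) + 4^((r+2)*(r+2)) * φ * uu n := by
        rw [hK]; ring
      rw [this]
      have h8 : (0:ℝ) < 4^((r+2)*(r+2)) * φ * uu n := by
        apply mul_pos (mul_pos _ hφpos) hupos; positivity
      linarith
    · -- n ≥ 2r+3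
      have he2 : uu (n-(r+1)) * uu (n-(n-(r+1))) ≤ 4^((r+1)*(r+1)) * φ * uu n := by
        apply hedge (n-(r+1)) (by omega)
        · rw [← Nat.choose_symm (show n-(r+1) ≤ n by omega),
            show n - (n-(r+1)) = r+1 by omega]
          exact Nat.choose_le_pow n (r+1)
        · rw [show n - (n-(r+1)) = r+1 by omega, Nat.mul_comm (n-(r+1)) (r+1)]
      have hs1 : ∑ l ∈ Ioc r (r+1), uu l * uu (n-l) + ∑ l ∈ Ioc (r+1) (n-(r+1)), uu l * uu (n-l)
          = ∑ l ∈ Ioc r (n-(r+1)), uu l * uu (n-l) :=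
        Finset.sum_Ioc_consecutive _ (by omega) (by omega)
      have hs2 : ∑ l ∈ Ioc (r+1) (n-(r+1)), uu l * uu (n-l)
          = ∑ l ∈ Ioc (r+1) (n-(r+2)), uu l * uu (n-l) + uu (n-(r+1)) * uu (n-(n-(r+1))) := by
        rw [show n - (r+1) = (n-(r+2))+1 by omega]
        exact Finset.sum_Ioc_succ_top (by omega) _
      have hs3 : ∑ l ∈ Ioc r (r+1), uu l * uu (n-l) = uu (r+1) * uu (n-(r+1)) := by
        rw [Nat.Ioc_succ_singleton r, Finset.sum_singleton]
      have hKsplit : K * φ * uu n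
          = 2 * (4^((r+1)*(r+1)) * φ * uu n) + 4^((r+2)*(r+2)) * φ * uu n := by
        rw [hK]; ring
      rw [← hs1, hs2, hs3, hKsplit]
      linarith
lemma two_mul_choose_two : ∀ k : ℕ, 2 * k.choose 2 = k * (k-1) := by
  intro k
  induction k with
  | zero => simp
  | succ k ih =>
      have h1 : (k+1).choose 2 = k + k.choose 2 := by
        rw [Nat.choose_succ_succ]
        simp [Nat.choose_one_right]
      rw [h1, Nat.mul_add, ih, Nat.succ_sub_one]
      cases k with
      | zero => simp
      | succ m => rw [Nat.succ_sub_one]; ring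

lemma exp_id {k n : ℕ} (hk : k ≤ n) :
    (n-k).choose 2 + k*n = n.choose 2 + k*(k+1)/2 := by
  obtain ⟨d, rfl⟩ : ∃ d, n = k + d := ⟨n - k, by omega⟩
  rw [show k + d - k = d by omega, chooseTwo_add k d]
  have h1 : k*(k+1)/2 = k.choose 2 + k := by
    have h2 : (k+1).choose 2 = k + k.choose 2 := by
      rw [Nat.choose_succ_succ]
      simp [Nat.choose_one_right]
    have h3 : (k+1).choose 2 = k*(k+1)/2 := by
      rw [Nat.choose_two_right, Nat.succ_sub_one, Nat.mul_comm]
    omega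
  rw [h1]
  have e1 : k*(k+d) = k*k + k*d := by ring
  have h2k := two_mul_choose_two k
  have e2 : k*(k-1) + k = k*k := by
    cases k with
    | zero => simp
    | succ m => rw [Nat.succ_sub_one]; ring
  omega

lemma term_eq (it3 : ℕ → ℝ) {k n : ℕ} (hk : k ≤ n) :
    it3 k * (n.choose k : ℝ) * (4:ℝ)^(k*(k+1)/2) / (4:ℝ)^(k*n)
      = (it3 k / (Nat.factorial k)) * uu (n-k) / uu n := by
  unfold uu
  have hfac : ((n.choose k : ℕ):ℝ) * (Nat.factorial k : ℝ) * ((Nat.factorial (n-k)) : ℝ)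
      = (Nat.factorial n : ℝ) := by
    exact_mod_cast congrArg (Nat.cast (R := ℝ)) (Nat.choose_mul_factorial_mul_factorial hk)
  have hexp4 : (4:ℝ)^((n-k).choose 2) * 4^(k*n) = 4^(n.choose 2) * 4^(k*(k+1)/2) := by
    rw [← pow_add, ← pow_add, exp_id hk]
  have h1 : ((Nat.factorial k : ℕ):ℝ) ≠ 0 := by positivity
  have h2 : ((Nat.factorial (n-k) : ℕ):ℝ) ≠ 0 := by positivity
  have h3 : ((Nat.factorial n : ℕ):ℝ) ≠ 0 := by positivity
  have h4 : (4:ℝ)^(k*n) ≠ 0 := by positivity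
  have h5 : (4:ℝ)^(n.choose 2) ≠ 0 := by positivity
  field_simp
  linear_combination (it3 k * (4:ℝ)^(k*(k+1)/2) * (4:ℝ)^(n.choose 2)) * hfac
    - (it3 k * (Nat.factorial n : ℝ)) * hexp4


lemma coeff_pow_eq_zero {C : ℝ⟦X⟧} (hC : constantCoeff (R := ℝ) C = 0) {k m : ℕ} (hmk : m < k) :
    coeff (R := ℝ) m (C ^ k) = 0 := by
  have h1 : (X : ℝ⟦X⟧) ∣ C := X_dvd_iff.2 hC
  have h2 : (X : ℝ⟦X⟧)^k ∣ C^k := pow_dvd_pow_of_dvd h1 k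
  exact X_pow_dvd_iff.1 h2 m hmk

lemma coeff_expPS_ext {C : ℝ⟦X⟧} (hC : constantCoeff (R := ℝ) C = 0) {p N : ℕ} (hpN : p < N) :
    coeff (R := ℝ) p (expPS C) = ∑ k ∈ range N, coeff (R := ℝ) p (C ^ k) / k.factorial := by
  unfold expPS
  rw [coeff_mk]
  apply Finset.sum_subset (Finset.range_subset_range.2 (by omega))
  intro k _ hnk
  rw [Finset.mem_range] at hnk
  push_neg at hnk
  rw [coeff_pow_eq_zero hC (by omega), zero_div]

lemma expPS_deriv {C : ℝ⟦X⟧} (hC : constantCoeff (R := ℝ) C = 0) :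
    d⁄dX ℝ (expPS C) = (d⁄dX ℝ C) * expPS C := by
  ext n
  rw [PowerSeries.coeff_derivative]
  have hL : coeff (R := ℝ) (n+1) (expPS C) * ((n:ℝ)+1)
      = ∑ k ∈ range (n+2), coeff (R := ℝ) (n+1) (C^k) / k.factorial * ((n:ℝ)+1) := by
    unfold expPS
    rw [coeff_mk, Finset.sum_mul]
  have hterm : ∀ k, coeff (R := ℝ) (n+1) (C^(k+1)) / (k+1).factorial * ((n:ℝ)+1)
      = coeff (R := ℝ) n (C^k * d⁄dX ℝ C) / k.factorial := by
    intro k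
    have hD : d⁄dX ℝ (C^(k+1)) = (k+1) • (C^k • d⁄dX ℝ C) := by
      have := Derivation.leibniz_pow (d⁄dX ℝ) C (k+1)
      simpa using this
    have h1 : coeff (R := ℝ) (n+1) (C^(k+1)) * ((n:ℝ)+1) = coeff (R := ℝ) n (d⁄dX ℝ (C^(k+1))) := by
      rw [PowerSeries.coeff_derivative]
    have h2 : coeff (R := ℝ) n (d⁄dX ℝ (C^(k+1))) = ((k:ℝ)+1) * coeff (R := ℝ) n (C^k * d⁄dX ℝ C) := by
      rw [hD]
      rw [map_nsmul]
      rw [smul_eq_mul (α := ℝ⟦X⟧)]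
      push_cast [nsmul_eq_mul]
      ring
    have h3 : ((k+1).factorial : ℝ) = ((k:ℝ)+1) * (k.factorial : ℝ) := by
      rw [Nat.factorial_succ]; push_cast; ring
    rw [div_mul_eq_mul_div, h1, h2, h3]
    have h4 : ((k:ℝ)+1) ≠ 0 := by positivity
    have h5 : ((k.factorial:ℝ)) ≠ 0 := by positivity
    field_simp
  rw [hL]
  rw [Finset.sum_range_succ']
  have hzero : coeff (R := ℝ) (n+1) (C^0) / (Nat.factorial 0 : ℝ) * ((n:ℝ)+1) = 0 := by
    simp [PowerSeries.coeff_one]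
  rw [hzero, add_zero]
  have hLHS : ∑ i ∈ range (n+1), coeff (R := ℝ) (n+1) (C^(i+1)) / (i+1).factorial * ((n:ℝ)+1)
      = ∑ i ∈ range (n+1), coeff (R := ℝ) n (C^i * d⁄dX ℝ C) / i.factorial :=
    Finset.sum_congr rfl fun i _ => hterm i
  rw [hLHS]
  -- now the RHS
  rw [PowerSeries.coeff_mul]
  have hR : ∑ p ∈ antidiagonal n, coeff (R := ℝ) p.1 (d⁄dX ℝ C) * coeff (R := ℝ) p.2 (expPS C)
      = ∑ p ∈ antidiagonal n, ∑ k ∈ range (n+1),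
          coeff (R := ℝ) p.1 (d⁄dX ℝ C) * coeff (R := ℝ) p.2 (C^k) / k.factorial := by
    apply Finset.sum_congr rfl
    intro p hp
    rw [Finset.HasAntidiagonal.mem_antidiagonal] at hp
    rw [coeff_expPS_ext hC (show p.2 < n+1 by omega), Finset.mul_sum]
    apply Finset.sum_congr rfl
    intro k _
    ring
  rw [hR, Finset.sum_comm]
  apply Finset.sum_congr rfl
  intro k _
  rw [mul_comm (C^k) (d⁄dX ℝ C), PowerSeries.coeff_mul, Finset.sum_div]
/-- pull the `0` term out of a `range (n+1)` sum -/
lemma sum_range_succ_eq_Ioc (f : ℕ → ℝ) (n : ℕ) :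
    ∑ k ∈ range (n+1), f k = f 0 + ∑ k ∈ Ioc 0 n, f k := by
  induction n with
  | zero => simp
  | succ n ih =>
      rw [Finset.sum_range_succ, ih, Finset.sum_Ioc_succ_top (Nat.zero_le _)]
      ring

/-- reflection `l ↦ t - l` on `Ioc 0 t`. -/
lemma sum_Ioc_reflect (f : ℕ → ℝ) (t : ℕ) :
    ∑ l ∈ Ioc 0 t, f l = ∑ k ∈ range t, f (t - k) := by
  apply Finset.sum_nbij' (fun l => t - l) (fun k => t - k)
  · intro a ha; rw [Finset.mem_Ioc] at ha; rw [Finset.mem_range]; omega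
  · intro a ha; rw [Finset.mem_range] at ha; rw [Finset.mem_Ioc]; omega
  · intro a ha; rw [Finset.mem_Ioc] at ha; omega
  · intro a ha; rw [Finset.mem_range] at ha; omega
  · intro a ha; rw [Finset.mem_Ioc] at ha; congr 1; omega

/-- reflection `q = n - m` between `Ioc (n-(r+1)) (n-1)` and `Ioc 0 r`. -/
lemma sum_Ioc_reflect' (f : ℕ → ℝ) (r n : ℕ) (h : r + 1 ≤ n) :
    ∑ q ∈ Ioc (n-(r+1)) (n-1), f q = ∑ m ∈ Ioc 0 r, f (n - m) := by
  apply Finset.sum_nbij' (fun q => n - q) (fun m => n - m)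
  · intro a ha; rw [Finset.mem_Ioc] at ha ⊢; omega
  · intro a ha; rw [Finset.mem_Ioc] at ha ⊢; omega
  · intro a ha; rw [Finset.mem_Ioc] at ha; omega
  · intro a ha; rw [Finset.mem_Ioc] at ha; omega
  · intro a ha; rw [Finset.mem_Ioc] at ha
    congr 1; omega

/-- regrouping double sums by `t = m + j`. -/
lemma regroup (cf e : ℕ → ℝ) (s n : ℕ) :
    ∑ m ∈ Ioc 0 s, cf m * ∑ j ∈ range (s+1-m), e j * uu (n-m-j)
      = ∑ t ∈ Ioc 0 s, (∑ m ∈ Ioc 0 t, cf m * e (t-m)) * uu (n-t) := by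
  have lhs : ∑ m ∈ Ioc 0 s, cf m * ∑ j ∈ range (s+1-m), e j * uu (n-m-j)
      = ∑ p ∈ (Ioc 0 s).sigma (fun m => range (s+1-m)),
          cf p.1 * (e p.2 * uu (n-p.1-p.2)) := by
    rw [Finset.sum_sigma]
    exact Finset.sum_congr rfl fun m _ => by rw [Finset.mul_sum]
  have rhs : ∑ t ∈ Ioc 0 s, (∑ m ∈ Ioc 0 t, cf m * e (t-m)) * uu (n-t)
      = ∑ p ∈ (Ioc 0 s).sigma (fun t => Ioc 0 t),
          cf p.2 * e (p.1 - p.2) * uu (n - p.1) := by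
    rw [Finset.sum_sigma]
    exact Finset.sum_congr rfl fun t _ => by rw [Finset.sum_mul]
  rw [lhs, rhs]
  apply Finset.sum_nbij' (fun p => (⟨p.1 + p.2, p.1⟩ : Σ _ : ℕ, ℕ))
    (fun p => (⟨p.2, p.1 - p.2⟩ : Σ _ : ℕ, ℕ))
  · rintro ⟨m, j⟩ ha
    rw [Finset.mem_sigma] at ha ⊢
    obtain ⟨h1, h2⟩ := ha
    dsimp only at h1 h2 ⊢
    rw [Finset.mem_Ioc] at h1
    rw [Finset.mem_range] at h2
    refine ⟨Finset.mem_Ioc.2 (by omega), Finset.mem_Ioc.2 (by omega)⟩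
  · rintro ⟨t, m⟩ ha
    rw [Finset.mem_sigma] at ha ⊢
    obtain ⟨h1, h2⟩ := ha
    dsimp only at h1 h2 ⊢
    rw [Finset.mem_Ioc] at h1
    rw [Finset.mem_Ioc] at h2
    refine ⟨Finset.mem_Ioc.2 (by omega), Finset.mem_range.2 (by omega)⟩
  · rintro ⟨m, j⟩ ha
    rw [Finset.mem_sigma] at ha
    obtain ⟨h1, h2⟩ := ha
    dsimp only at h1 h2 ⊢
    rw [Finset.mem_Ioc] at h1; rw [Finset.mem_range] at h2
    simp only [Nat.add_sub_cancel_left]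
  · rintro ⟨t, m⟩ ha
    rw [Finset.mem_sigma] at ha
    obtain ⟨h1, h2⟩ := ha
    dsimp only at h1 h2 ⊢
    rw [Finset.mem_Ioc] at h1 h2
    congr 1 <;> omega
  · rintro ⟨m, j⟩ ha
    rw [Finset.mem_sigma] at ha
    obtain ⟨h1, h2⟩ := ha
    dsimp only at h1 h2 ⊢
    rw [Finset.mem_Ioc] at h1; rw [Finset.mem_range] at h2
    simp only [Nat.add_sub_cancel_left, Nat.sub_sub]
    ring

/-- `|i| ≤ C₀ · uu`. -/
lemma i_bound (i : ℕ → ℝ) (hi0 : i 0 = 0)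
    (hF1 : ∀ n, 1 ≤ n → uu n = ∑ l ∈ Ioc 0 n, i l * uu (n-l)) :
    ∃ C₀ : ℝ, 0 < C₀ ∧ ∀ n, |i n| ≤ C₀ * uu n := by
  set K₀ : ℝ := 2 * 4^((0+1)*(0+1)) + 4^((0+2)*(0+2)) with hK₀
  have hK₀pos : (0:ℝ) < K₀ := by rw [hK₀]; positivity
  -- choose n₁ with K₀ * (n/4^n) ≤ 1/2 for n ≥ n₁
  obtain ⟨n₁, hn₁⟩ : ∃ n₁ : ℕ, ((1:ℝ)/2)^n₁ < 1/(2*K₀) :=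
    exists_pow_lt_of_lt_one (by positivity) (by norm_num)
  have hsmallfac : ∀ n, n₁ ≤ n → K₀ * ((n:ℝ)^(0+1)/4^((0+1)*n)) ≤ 1/2 := by
    intro n hn
    have h1 : ((n:ℝ))^(0+1)/4^((0+1)*n) ≤ (1/2:ℝ)^n := by
      simp only [pow_one, one_mul, zero_add]
      have h2 : (n:ℝ) ≤ 2^n := by exact_mod_cast (Nat.lt_two_pow_self (n := n)).le
      rw [div_le_iff₀ (by positivity)]
      calc (n:ℝ) ≤ 2^n := h2
        _ = (1/2:ℝ)^n * 4^n := by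
            rw [← mul_pow]; norm_num
    have h3 : ((1:ℝ)/2)^n ≤ (1/2:ℝ)^n₁ := by
      apply pow_le_pow_of_le_one (by norm_num) (by norm_num) hn
    calc K₀ * ((n:ℝ)^(0+1)/4^((0+1)*n)) ≤ K₀ * (1/2:ℝ)^n₁ := by
          apply mul_le_mul_of_nonneg_left (h1.trans h3) hK₀pos.le
      _ ≤ K₀ * (1/(2*K₀)) := mul_le_mul_of_nonneg_left hn₁.le hK₀pos.le
      _ = 1/2 := by field_simp
  obtain ⟨C₀, hC₀⟩ : ∃ x : ℝ, x = 2 + ∑ m ∈ range (n₁+1), |i m| / uu m := ⟨_, rfl⟩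
  have hC₀pos : (0:ℝ) < C₀ := by
    rw [hC₀]
    have : (0:ℝ) ≤ ∑ m ∈ range (n₁+1), |i m| / uu m :=
      Finset.sum_nonneg fun m _ => div_nonneg (abs_nonneg _) (uu_pos m).le
    linarith
  have hC₀2 : (2:ℝ) ≤ C₀ := by
    rw [hC₀]
    have : (0:ℝ) ≤ ∑ m ∈ range (n₁+1), |i m| / uu m :=
      Finset.sum_nonneg fun m _ => div_nonneg (abs_nonneg _) (uu_pos m).le
    linarith
  refine ⟨C₀, hC₀pos, ?_⟩
  intro n
  induction n using Nat.strong_induction_on with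
  | _ n IH =>
    by_cases hn : n ≤ n₁
    · -- base case
      have hmem : |i n| / uu n ≤ ∑ m ∈ range (n₁+1), |i m| / uu m :=
        Finset.single_le_sum (f := fun m => |i m| / uu m)
          (fun m _ => div_nonneg (abs_nonneg _) (uu_pos m).le)
          (Finset.mem_range.2 (by omega))
      have := uu_pos n
      rw [div_le_iff₀ this] at hmem
      calc |i n| ≤ (∑ m ∈ range (n₁+1), |i m| / uu m) * uu n := hmem
        _ ≤ C₀ * uu n := by
            apply mul_le_mul_of_nonneg_right _ this.le
            rw [hC₀]; linarith
    · push_neg at hn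
      have hn1 : 1 ≤ n := by omega
      have hrec : i n = uu n - ∑ l ∈ Ioc 0 (n-1), i l * uu (n-l) := by
        have h := hF1 n hn1
        rw [show n = (n-1)+1 by omega] at h
        rw [Finset.sum_Ioc_succ_top (Nat.zero_le _)] at h
        rw [show (n-1)+1 = n by omega] at h
        rw [show n - n = 0 by omega, uu_zero] at h
        linarith [h]
      rw [hrec]
      have habs : |uu n - ∑ l ∈ Ioc 0 (n-1), i l * uu (n-l)|
          ≤ uu n + ∑ l ∈ Ioc 0 (n-1), |i l| * uu (n-l) := by
        refine (abs_sub _ _).trans ?_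
        rw [abs_of_pos (uu_pos n)]
        gcongr
        refine (Finset.abs_sum_le_sum_abs _ _).trans ?_
        apply le_of_eq
        apply Finset.sum_congr rfl
        intro l _
        rw [abs_mul, abs_of_pos (uu_pos (n-l))]
      refine habs.trans ?_
      have hsum : ∑ l ∈ Ioc 0 (n-1), |i l| * uu (n-l)
          ≤ C₀ * ∑ l ∈ Ioc 0 (n-1), uu l * uu (n-l) := by
        rw [Finset.mul_sum]
        apply Finset.sum_le_sum
        intro l hl
        rw [Finset.mem_Ioc] at hl
        have := IH l (by omega)
        calc |i l| * uu (n-l) ≤ (C₀ * uu l) * uu (n-l) :=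
              mul_le_mul_of_nonneg_right this (uu_pos (n-l)).le
          _ = C₀ * (uu l * uu (n-l)) := by ring
      have hconv := conv_bound 0 n hn1
      have : ∑ l ∈ Ioc 0 (n-1), uu l * uu (n-l) ≤ K₀ * ((n:ℝ)^(0+1)/4^((0+1)*n)) * uu n := by
        rw [hK₀]
        convert hconv using 3 <;> omega
      have hhalf := hsmallfac n (by omega)
      have huu := uu_pos n
      have : ∑ l ∈ Ioc 0 (n-1), |i l| * uu (n-l) ≤ C₀ * ((1:ℝ)/2) * uu n := by
        calc ∑ l ∈ Ioc 0 (n-1), |i l| * uu (n-l)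
            ≤ C₀ * (K₀ * ((n:ℝ)^(0+1)/4^((0+1)*n)) * uu n) := by
              refine hsum.trans ?_
              apply mul_le_mul_of_nonneg_left this hC₀pos.le
          _ = C₀ * (K₀ * ((n:ℝ)^(0+1)/4^((0+1)*n))) * uu n := by ring
          _ ≤ C₀ * ((1:ℝ)/2) * uu n := by
              apply mul_le_mul_of_nonneg_right _ huu.le
              exact mul_le_mul_of_nonneg_left hhalf hC₀pos.le
      calc uu n + ∑ l ∈ Ioc 0 (n-1), |i l| * uu (n-l)
          ≤ uu n + C₀ * ((1:ℝ)/2) * uu n := by linarith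
        _ ≤ C₀ * uu n := by nlinarith [mul_nonneg (sub_nonneg.2 hC₀2) huu.le]
lemma prod_bound {m s n : ℕ} (hm1 : 1 ≤ m) (hms : m ≤ s) (hn : 2*s+2 ≤ n) :
    uu m * ((((n-m:ℕ)):ℝ)^(s-m+1)/4^((s-m+1)*(n-m))) * uu (n-m)
      ≤ 4^((s+1)*s) * ((n:ℝ)^(s+1)/4^((s+1)*n)) * uu n := by
  have hmn : m ≤ n := by omega
  have e1 : uu m * ((((n-m:ℕ)):ℝ)^(s-m+1)/4^((s-m+1)*(n-m))) * uu (n-m)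
      = (uu m * uu (n-m)) * (((n-m:ℕ)):ℝ)^(s-m+1) / 4^((s-m+1)*(n-m)) := by ring
  rw [e1, uu_mul_uu hmn]
  have hsplit1 : ((4:ℝ))^(m*(n-m)) * 4^((s-m+1)*(n-m)) = 4^((s+1)*(n-m)) := by
    rw [← pow_add, ← Nat.add_mul]
    congr 2
    omega
  have hsplit2 : ((4:ℝ))^((s+1)*(n-m)) * 4^((s+1)*m) = 4^((s+1)*n) := by
    rw [← pow_add, ← Nat.mul_add]
    congr 2
    omega
  have hupos := uu_pos n
  have hP : (0:ℝ) < 4^((s+1)*(n-m)) := by positivity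
  rw [div_mul_eq_mul_div, div_div, hsplit1]
  rw [show ((4:ℝ))^((s+1)*s) * ((n:ℝ)^(s+1)/4^((s+1)*n)) * uu n
      = (4^((s+1)*s) * (n:ℝ)^(s+1) * uu n) / 4^((s+1)*n) by ring]
  rw [div_le_div_iff₀ hP (by positivity), ← hsplit2]
  have hmain : (n.choose m : ℝ) * uu n * (((n-m:ℕ)):ℝ)^(s-m+1) * 4^((s+1)*m)
      ≤ 4^((s+1)*s) * ((n:ℝ)^(s+1)) * uu n := by
    have hc : (n.choose m : ℝ) ≤ (n:ℝ)^m := by exact_mod_cast Nat.choose_le_pow n m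
    have hx : ((((n-m:ℕ)):ℝ))^(s-m+1) ≤ ((n:ℝ))^(s-m+1) := by
      apply pow_le_pow_left₀ (by positivity)
      exact_mod_cast Nat.sub_le n m
    have h4 : ((4:ℝ))^((s+1)*m) ≤ 4^((s+1)*s) :=
      pow_le_pow_right₀ (by norm_num) (Nat.mul_le_mul_left _ hms)
    have hpow : (n:ℝ)^m * (n:ℝ)^(s-m+1) = (n:ℝ)^(s+1) := by
      rw [← pow_add]
      congr 1
      omega
    calc (n.choose m : ℝ) * uu n * (((n-m:ℕ)):ℝ)^(s-m+1) * 4^((s+1)*m)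
        ≤ (n:ℝ)^m * uu n * ((n:ℝ))^(s-m+1) * 4^((s+1)*s) := by
          gcongr
        _ = (n:ℝ)^m * (n:ℝ)^(s-m+1) * 4^((s+1)*s) * uu n := by ring
        _ = 4^((s+1)*s) * ((n:ℝ)^(s+1)) * uu n := by rw [hpow]; ring
  calc (n.choose m : ℝ) * uu n * (((n-m:ℕ)):ℝ)^(s-m+1) * (4^((s+1)*(n-m)) * 4^((s+1)*m))
      = ((n.choose m : ℝ) * uu n * (((n-m:ℕ)):ℝ)^(s-m+1) * 4^((s+1)*m)) * 4^((s+1)*(n-m)) := by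
        ring
    _ ≤ (4^((s+1)*s) * ((n:ℝ)^(s+1)) * uu n) * 4^((s+1)*(n-m)) :=
        mul_le_mul_of_nonneg_right hmain hP.le

lemma exp_err (i e : ℕ → ℝ) (C₀ : ℝ) (hC₀pos : 0 < C₀)
    (hiB : ∀ n, |i n| ≤ C₀ * uu n)
    (hF1 : ∀ n, 1 ≤ n → uu n = ∑ l ∈ Ioc 0 n, i l * uu (n-l))
    (he0 : e 0 = 1)
    (heRec : ∀ t, 1 ≤ t → i t + ∑ k ∈ range (t+1), e k * uu (t-k) = 0) :
    ∀ s : ℕ, ∃ K : ℝ, 0 < K ∧ ∀ n, 2*s+2 ≤ n →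
      |i n - ∑ j ∈ range (s+1), e j * uu (n-j)|
        ≤ K * ((n:ℝ)^(s+1)/4^((s+1)*n)) * uu n := by
  intro s
  induction s using Nat.strong_induction_on with
  | _ s IH =>
  choose KF hKFpos hKFbound using IH
  set Kc : ℝ := 2 * 4^((s+1)*(s+1)) + 4^((s+2)*(s+2)) with hKc
  have hKcpos : (0:ℝ) < Kc := by rw [hKc]; positivity
  set KG : ℕ → ℝ := fun m => if h : s - m < s then KF (s-m) h else 1 with hKG
  have hKGpos : ∀ m, 0 < KG m := by
    intro m
    rw [hKG]
    by_cases h : s - m < s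
    · simp only [dif_pos h]; exact hKFpos _ h
    · simp only [dif_neg h]; norm_num
  refine ⟨C₀ * Kc + 4^((s+1)*s) * ∑ m ∈ Ioc 0 s, KG m, ?_, ?_⟩
  · have h1 : (0:ℝ) ≤ ∑ m ∈ Ioc 0 s, KG m :=
      Finset.sum_nonneg fun m _ => (hKGpos m).le
    positivity
  intro n hn
  have hn1 : 1 ≤ n := by omega
  have hupos := uu_pos n
  have hφpos : (0:ℝ) < (n:ℝ)^(s+1)/4^((s+1)*n) := by positivity
  -- the three-way split of F1
  set Mid : ℝ := ∑ l ∈ Ioc s (n-(s+1)), i l * uu (n-l) with hMid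
  set Err : ℕ → ℝ := fun m => i (n-m) - ∑ j ∈ range (s+1-m), e j * uu (n-m-j) with hErr
  have hkey : uu n = (∑ l ∈ Ioc 0 s, i l * uu (n-l)) + Mid
      + ((∑ m ∈ Ioc 0 s, uu m * i (n-m)) + i n) := by
    have h1 := hF1 n hn1
    have hs1 : (∑ l ∈ Ioc 0 s, i l * uu (n-l)) + (∑ l ∈ Ioc s (n-(s+1)), i l * uu (n-l))
        = ∑ l ∈ Ioc 0 (n-(s+1)), i l * uu (n-l) :=
      Finset.sum_Ioc_consecutive _ (by omega) (by omega)
    have hs2 : (∑ l ∈ Ioc 0 (n-(s+1)), i l * uu (n-l))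
        + (∑ l ∈ Ioc (n-(s+1)) n, i l * uu (n-l)) = ∑ l ∈ Ioc 0 n, i l * uu (n-l) :=
      Finset.sum_Ioc_consecutive _ (by omega) (by omega)
    have hs3 : ∑ l ∈ Ioc (n-(s+1)) n, i l * uu (n-l)
        = (∑ q ∈ Ioc (n-(s+1)) (n-1), i q * uu (n-q)) + i n := by
      rw [show n = (n-1)+1 by omega, Finset.sum_Ioc_succ_top (by omega)]
      rw [show (n-1)+1 = n by omega, show n - n = 0 by omega, uu_zero, mul_one]
    have hs4 : ∑ q ∈ Ioc (n-(s+1)) (n-1), i q * uu (n-q)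
        = ∑ m ∈ Ioc 0 s, uu m * i (n-m) := by
      rw [sum_Ioc_reflect' (fun q => i q * uu (n-q)) s n (by omega)]
      apply Finset.sum_congr rfl
      intro m hm
      rw [Finset.mem_Ioc] at hm
      rw [show n - (n-m) = m by omega]
      ring
    rw [h1, ← hs2, ← hs1, hs3, hs4]
  -- the cancellation
  have hbr : ∀ t ∈ Ioc 0 s, (∑ m ∈ Ioc 0 t, uu m * e (t-m)) = -(i t) - e t := by
    intro t ht
    rw [Finset.mem_Ioc] at ht
    have h1 : ∑ m ∈ Ioc 0 t, uu m * e (t-m) = ∑ k ∈ range t, e k * uu (t-k) := by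
      rw [sum_Ioc_reflect (fun m => uu m * e (t-m)) t]
      apply Finset.sum_congr rfl
      intro k hk
      rw [Finset.mem_range] at hk
      rw [show t - (t-k) = k by omega]
      ring
    have h2 := heRec t ht.1
    rw [Finset.sum_range_succ, show t - t = 0 by omega, uu_zero, mul_one] at h2
    rw [h1]
    linarith
  have hS2 : (∑ m ∈ Ioc 0 s, uu m * i (n-m))
      = ∑ t ∈ Ioc 0 s, (-(i t) - e t) * uu (n-t) + ∑ m ∈ Ioc 0 s, uu m * Err m := by
    have h1 : ∀ m ∈ Ioc 0 s, uu m * i (n-m)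
        = uu m * (∑ j ∈ range (s+1-m), e j * uu (n-m-j)) + uu m * Err m := by
      intro m _
      rw [hErr]
      ring
    rw [Finset.sum_congr rfl h1, Finset.sum_add_distrib, regroup]
    congr 1
    apply Finset.sum_congr rfl
    intro t ht
    rw [hbr t ht]
  have hTT : ∑ t ∈ Ioc 0 s, (-(i t) - e t) * uu (n-t)
      = -(∑ l ∈ Ioc 0 s, i l * uu (n-l)) - ∑ j ∈ Ioc 0 s, e j * uu (n-j) := by
    rw [← Finset.sum_neg_distrib, ← Finset.sum_sub_distrib]
    apply Finset.sum_congr rfl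
    intro t _
    ring
  have hGsum : ∑ j ∈ range (s+1), e j * uu (n-j) = uu n + ∑ j ∈ Ioc 0 s, e j * uu (n-j) := by
    rw [sum_range_succ_eq_Ioc (fun j => e j * uu (n-j)), he0, Nat.sub_zero, one_mul]
  have hG : i n - ∑ j ∈ range (s+1), e j * uu (n-j)
      = -(∑ m ∈ Ioc 0 s, uu m * Err m) - Mid := by
    rw [hGsum]
    have := hkey
    rw [hS2, hTT] at this
    linarith
  rw [hG]
  -- bounds
  have hMidB : |Mid| ≤ C₀ * Kc * ((n:ℝ)^(s+1)/4^((s+1)*n)) * uu n := by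
    have h1 : |Mid| ≤ ∑ l ∈ Ioc s (n-(s+1)), C₀ * (uu l * uu (n-l)) := by
      rw [hMid]
      refine (Finset.abs_sum_le_sum_abs _ _).trans (Finset.sum_le_sum ?_)
      intro l _
      rw [abs_mul, abs_of_pos (uu_pos (n-l))]
      calc |i l| * uu (n-l) ≤ (C₀ * uu l) * uu (n-l) :=
            mul_le_mul_of_nonneg_right (hiB l) (uu_pos (n-l)).le
        _ = C₀ * (uu l * uu (n-l)) := by ring
    rw [← Finset.mul_sum] at h1
    refine h1.trans ?_
    have h2 := conv_bound s n hn1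
    calc C₀ * ∑ l ∈ Ioc s (n-(s+1)), uu l * uu (n-l)
        ≤ C₀ * (Kc * ((n:ℝ)^(s+1)/4^((s+1)*n)) * uu n) := by
          apply mul_le_mul_of_nonneg_left _ hC₀pos.le
          rw [hKc]
          exact h2
      _ = C₀ * Kc * ((n:ℝ)^(s+1)/4^((s+1)*n)) * uu n := by ring
  have hErrB : ∀ m ∈ Ioc 0 s, uu m * |Err m|
      ≤ KG m * 4^((s+1)*s) * ((n:ℝ)^(s+1)/4^((s+1)*n)) * uu n := by
    intro m hm
    rw [Finset.mem_Ioc] at hm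
    have hlt : s - m < s := by omega
    have hKGm : KG m = KF (s-m) hlt := by rw [hKG]; simp only [dif_pos hlt]
    have hb := hKFbound (s-m) hlt (n-m) (by omega)
    have hsum_eq : ∑ j ∈ range ((s-m)+1), e j * uu ((n-m)-j)
        = ∑ j ∈ range (s+1-m), e j * uu (n-m-j) := by
      rw [show s+1-m = s-m+1 by omega]
    rw [hsum_eq] at hb
    have hb2 : |Err m| ≤ KF (s-m) hlt * (((n-m:ℕ):ℝ)^((s-m)+1)/4^(((s-m)+1)*(n-m))) * uu (n-m) := by
      rw [hErr]
      exact hb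
    calc uu m * |Err m|
        ≤ uu m * (KF (s-m) hlt * (((n-m:ℕ):ℝ)^((s-m)+1)/4^(((s-m)+1)*(n-m))) * uu (n-m)) :=
          mul_le_mul_of_nonneg_left hb2 (uu_pos m).le
      _ = KF (s-m) hlt * (uu m * (((n-m:ℕ):ℝ)^((s-m)+1)/4^(((s-m)+1)*(n-m))) * uu (n-m)) := by
          ring
      _ ≤ KF (s-m) hlt * (4^((s+1)*s) * ((n:ℝ)^(s+1)/4^((s+1)*n)) * uu n) := by
          apply mul_le_mul_of_nonneg_left _ (hKFpos _ hlt).le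
          exact prod_bound hm.1 hm.2 hn
      _ = KG m * 4^((s+1)*s) * ((n:ℝ)^(s+1)/4^((s+1)*n)) * uu n := by
          rw [hKGm]; ring
  have hSE : |∑ m ∈ Ioc 0 s, uu m * Err m|
      ≤ (∑ m ∈ Ioc 0 s, KG m) * 4^((s+1)*s) * ((n:ℝ)^(s+1)/4^((s+1)*n)) * uu n := by
    refine (Finset.abs_sum_le_sum_abs _ _).trans ?_
    have h1 : ∀ m ∈ Ioc 0 s, |uu m * Err m|
        ≤ KG m * 4^((s+1)*s) * ((n:ℝ)^(s+1)/4^((s+1)*n)) * uu n := by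
      intro m hm
      rw [abs_mul, abs_of_pos (uu_pos m)]
      exact hErrB m hm
    refine (Finset.sum_le_sum h1).trans (le_of_eq ?_)
    rw [← Finset.sum_mul, ← Finset.sum_mul, ← Finset.sum_mul]
  calc |(-(∑ m ∈ Ioc 0 s, uu m * Err m)) - Mid|
      ≤ |∑ m ∈ Ioc 0 s, uu m * Err m| + |Mid| := by
        refine (abs_sub _ _).trans ?_
        rw [abs_neg]
    _ ≤ (∑ m ∈ Ioc 0 s, KG m) * 4^((s+1)*s) * ((n:ℝ)^(s+1)/4^((s+1)*n)) * uu n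
        + C₀ * Kc * ((n:ℝ)^(s+1)/4^((s+1)*n)) * uu n := by
        linarith
    _ = (C₀ * Kc + 4^((s+1)*s) * ∑ m ∈ Ioc 0 s, KG m) * ((n:ℝ)^(s+1)/4^((s+1)*n)) * uu n := by
        ring

section extract
variable (c it3 : ℕ → ℝ)

/-- the EGF of the digraph counts -/
noncomputable def Aps : ℝ⟦X⟧ := PowerSeries.mk uu
noncomputable def Ips : ℝ⟦X⟧ := PowerSeries.mk (fun k => it3 k / (Nat.factorial k))
noncomputable def Cps : ℝ⟦X⟧ := PowerSeries.mk (fun n => c n / (Nat.factorial n))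
noncomputable def Eps : ℝ⟦X⟧ := (Aps)⁻¹ * (Aps)⁻¹
noncomputable def ee (t : ℕ) : ℝ := coeff (R := ℝ) t (Eps)

lemma constA : constantCoeff (R := ℝ) Aps = 1 := by
  rw [Aps, PowerSeries.constantCoeff_mk, uu_zero]

lemma AinvA : Aps * (Aps)⁻¹ = 1 :=
  PowerSeries.mul_inv_cancel _ (by rw [constA]; norm_num)

lemma Ainv_eq (hit : Ips it3 = 1 - (Aps)⁻¹) : (Aps)⁻¹ = 1 - Ips it3 := by rw [hit]; ring

lemma AIA (hit : Ips it3 = 1 - (Aps)⁻¹) : Aps * (1 - Ips it3) = 1 := by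
  rw [← Ainv_eq it3 hit]; exact AinvA

lemma EA (hit : Ips it3 = 1 - (Aps)⁻¹) : Eps * Aps = 1 - Ips it3 := by
  rw [Eps, mul_assoc, mul_comm (Aps)⁻¹ Aps, AinvA, mul_one, Ainv_eq it3 hit]

lemma ee_zero : ee 0 = 1 := by
  rw [ee, Eps, PowerSeries.coeff_zero_eq_constantCoeff_apply, map_mul]
  rw [PowerSeries.constantCoeff_inv, constA]
  norm_num

lemma F1 (hit : Ips it3 = 1 - (Aps)⁻¹) (hit0 : it3 0 = 0) : ∀ n, 1 ≤ n → uu n = ∑ l ∈ Ioc 0 n, (it3 l / (Nat.factorial l)) * uu (n-l) := by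
  intro n hn
  have h := congrArg (coeff (R := ℝ) n) (AIA it3 hit)
  rw [PowerSeries.coeff_one, if_neg (by omega)] at h
  rw [mul_sub, mul_one, map_sub] at h
  rw [mul_comm Aps (Ips it3), PowerSeries.coeff_mul] at h
  rw [Finset.Nat.sum_antidiagonal_eq_sum_range_succ_mk] at h
  have h2 : ∀ p ∈ range (n+1), coeff (R := ℝ) p (Ips it3) * coeff (R := ℝ) (n-p) Aps
      = (it3 p / (Nat.factorial p)) * uu (n-p) := by
    intro p _
    rw [Ips, Aps, coeff_mk, coeff_mk]
  rw [Finset.sum_congr rfl h2] at h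
  rw [sum_range_succ_eq_Ioc (fun p => (it3 p / (Nat.factorial p)) * uu (n-p)) n] at h
  rw [hit0] at h
  simp only [zero_div, zero_mul, zero_add] at h
  have h3 : coeff (R := ℝ) n Aps = uu n := by rw [Aps, coeff_mk]
  rw [h3] at h
  linarith [h]

lemma eRec (hit : Ips it3 = 1 - (Aps)⁻¹) : ∀ t, 1 ≤ t →
    (it3 t / (Nat.factorial t)) + ∑ k ∈ range (t+1), ee k * uu (t-k) = 0 := by
  intro t ht
  have h := congrArg (coeff (R := ℝ) t) (EA it3 hit)
  rw [map_sub, PowerSeries.coeff_one, if_neg (by omega)] at h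
  rw [PowerSeries.coeff_mul, Finset.Nat.sum_antidiagonal_eq_sum_range_succ_mk] at h
  have h2 : ∀ p ∈ range (t+1), coeff (R := ℝ) p (Eps) * coeff (R := ℝ) (t-p) Aps = ee p * uu (t-p) := by
    intro p _
    rw [Aps, coeff_mk, ee]
  rw [Finset.sum_congr rfl h2] at h
  have h3 : coeff (R := ℝ) t (Ips it3) = it3 t / (Nat.factorial t) := by rw [Ips, coeff_mk]
  rw [h3] at h
  linarith [h]

lemma dA_eq (hexp : Aps = expPS (Cps c)) (hc0 : c 0 = 0) :
    d⁄dX ℝ Aps = d⁄dX ℝ (Cps c) * Aps := by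
  conv_lhs => rw [hexp]
  rw [expPS_deriv, ← hexp]
  rw [Cps, PowerSeries.constantCoeff_mk, hc0]
  norm_num

lemma dC_eq (hexp : Aps = expPS (Cps c)) (hc0 : c 0 = 0) (hit : Ips it3 = 1 - (Aps)⁻¹) :
    d⁄dX ℝ (Cps c) = d⁄dX ℝ Aps * (1 - Ips it3) := by
  calc d⁄dX ℝ (Cps c) = d⁄dX ℝ (Cps c) * (Aps * (1 - Ips it3)) := by rw [AIA it3 hit, mul_one]
    _ = (d⁄dX ℝ (Cps c) * Aps) * (1 - Ips it3) := by ring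
    _ = d⁄dX ℝ Aps * (1 - Ips it3) := by rw [← dA_eq c hexp hc0]

lemma coeff_dA (j : ℕ) : coeff (R := ℝ) j (d⁄dX ℝ Aps) = uu (j+1) * ((j:ℝ)+1) := by
  rw [PowerSeries.coeff_derivative, Aps, coeff_mk]

lemma F2 (hexp : Aps = expPS (Cps c)) (hc0 : c 0 = 0) (hit : Ips it3 = 1 - (Aps)⁻¹)
    (hit0 : it3 0 = 0) : ∀ n, 1 ≤ n → (c n / (Nat.factorial n)) * (n:ℝ)
    = uu n * (n:ℝ)
      - ∑ q ∈ Ioc 0 (n-1), (it3 q / (Nat.factorial q)) * (uu (n-q) * ((n-q:ℕ):ℝ)) := by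
  intro n hn
  have h := congrArg (coeff (R := ℝ) (n-1)) (dC_eq c it3 hexp hc0 hit)
  rw [PowerSeries.coeff_derivative, Cps, coeff_mk] at h
  rw [mul_sub, mul_one, map_sub, mul_comm (d⁄dX ℝ Aps) (Ips it3),
    PowerSeries.coeff_mul, Finset.Nat.sum_antidiagonal_eq_sum_range_succ_mk] at h
  have hcast : ∀ p : ℕ, p ≤ n - 1 → ((p:ℝ) = (p:ℝ)) := fun p _ => rfl
  have h2 : ∀ p ∈ range ((n-1)+1), coeff (R := ℝ) p (Ips it3) * coeff (R := ℝ) (n-1-p) (d⁄dX ℝ Aps)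
      = (it3 p / (Nat.factorial p)) * (uu (n-p) * ((n-p:ℕ):ℝ)) := by
    intro p hp
    rw [Finset.mem_range] at hp
    rw [Ips, coeff_mk, coeff_dA]
    congr 2
    · congr 1
      omega
    · have e1 : (n-1-p)+1 = n-p := by omega
      calc ((n-1-p:ℕ):ℝ) + 1 = (((n-1-p)+1 : ℕ):ℝ) := by push_cast; ring
        _ = ((n-p:ℕ):ℝ) := by rw [e1]
  rw [Finset.sum_congr rfl h2] at h
  rw [sum_range_succ_eq_Ioc (fun p => (it3 p / (Nat.factorial p)) * (uu (n-p) * ((n-p:ℕ):ℝ)))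
    (n-1)] at h
  rw [hit0] at h
  simp only [zero_div, zero_mul, zero_add] at h
  rw [coeff_dA] at h
  have e2 : (n-1)+1 = n := by omega
  rw [e2] at h
  have e3 : ((n-1:ℕ):ℝ) + 1 = (n:ℝ) := by
    calc ((n-1:ℕ):ℝ) + 1 = (((n-1)+1 : ℕ):ℝ) := by push_cast; ring
      _ = (n:ℝ) := by rw [e2]
  rw [e3] at h
  linarith [h]

lemma dI_eq (hit : Ips it3 = 1 - (Aps)⁻¹) :
    d⁄dX ℝ (Ips it3) = Eps * d⁄dX ℝ Aps := by
  have h0 : d⁄dX ℝ (Aps * (1 - Ips it3)) = 0 := by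
    rw [AIA it3 hit]
    exact Derivation.map_one_eq_zero _
  rw [Derivation.leibniz] at h0
  have h1 : d⁄dX ℝ (1 - Ips it3) = -(d⁄dX ℝ (Ips it3)) := by
    rw [map_sub, Derivation.map_one_eq_zero]
    ring
  rw [h1, smul_eq_mul, smul_eq_mul] at h0
  have h2 : Aps * d⁄dX ℝ (Ips it3) = (1 - Ips it3) * d⁄dX ℝ Aps := by
    linear_combination -h0
  calc d⁄dX ℝ (Ips it3) = ((Aps)⁻¹ * Aps) * d⁄dX ℝ (Ips it3) := by
        rw [mul_comm (Aps)⁻¹ Aps, AinvA, one_mul]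
    _ = (Aps)⁻¹ * (Aps * d⁄dX ℝ (Ips it3)) := by ring
    _ = (Aps)⁻¹ * ((1 - Ips it3) * d⁄dX ℝ Aps) := by rw [h2]
    _ = (Aps)⁻¹ * ((Aps)⁻¹ * d⁄dX ℝ Aps) := by rw [← Ainv_eq it3 hit]
    _ = Eps * d⁄dX ℝ Aps := by rw [Eps]; ring

lemma L2 (hit : Ips it3 = 1 - (Aps)⁻¹) : ∀ m : ℕ, 1 ≤ m →
    (m:ℝ) * (it3 m / (Nat.factorial m)) = ∑ k ∈ Ioc 0 m, (k:ℝ) * uu k * ee (m-k) := by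
  intro m hm
  have h := congrArg (coeff (R := ℝ) (m-1)) (dI_eq it3 hit)
  rw [PowerSeries.coeff_derivative, Ips, coeff_mk] at h
  rw [PowerSeries.coeff_mul, Finset.Nat.sum_antidiagonal_eq_sum_range_succ_mk] at h
  have h2 : ∀ p ∈ range ((m-1)+1), coeff (R := ℝ) p (Eps) * coeff (R := ℝ) (m-1-p) (d⁄dX ℝ Aps)
      = ee p * (uu (m-p) * ((m-p:ℕ):ℝ)) := by
    intro p hp
    rw [Finset.mem_range] at hp
    rw [coeff_dA, ee]
    congr 2
    · congr 1
      omega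
    · have e1 : (m-1-p)+1 = m-p := by omega
      calc ((m-1-p:ℕ):ℝ) + 1 = (((m-1-p)+1 : ℕ):ℝ) := by push_cast; ring
        _ = ((m-p:ℕ):ℝ) := by rw [e1]
  rw [Finset.sum_congr rfl h2] at h
  have e2 : (m-1)+1 = m := by omega
  rw [e2] at h
  have e3 : ((m-1:ℕ):ℝ) + 1 = (m:ℝ) := by
    calc ((m-1:ℕ):ℝ) + 1 = (((m-1)+1 : ℕ):ℝ) := by push_cast; ring
      _ = (m:ℝ) := by rw [e2]
  rw [e3] at h
  have h4 : ∑ k ∈ Ioc 0 m, (k:ℝ) * uu k * ee (m-k)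
      = ∑ p ∈ range m, ee p * (uu (m-p) * ((m-p:ℕ):ℝ)) := by
    rw [sum_Ioc_reflect (fun k => (k:ℝ) * uu k * ee (m-k)) m]
    apply Finset.sum_congr rfl
    intro p hp
    rw [Finset.mem_range] at hp
    rw [show m - (m-p) = p by omega]
    ring
  rw [h4, ← h]
  ring

end extract

set_option maxHeartbeats 2000000 in
/-- asymptotic probability that a random labeled digraph is weakly connected. -/
theorem digraph_weakly_connected
    (c it3 : ℕ → ℝ) (hc0 : c 0 = 0) (hit0 : it3 0 = 0)
    (hexp : (PowerSeries.mk fun n => ((4 : ℝ)) ^ (n.choose 2) / (Nat.factorial n)) =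
      expPS (PowerSeries.mk fun n => c n / (Nat.factorial n)))
    (hit : (PowerSeries.mk fun k => it3 k / (Nat.factorial k)) =
      1 - (PowerSeries.mk fun n => ((4 : ℝ)) ^ (n.choose 2) / (Nat.factorial n))⁻¹) :
    ∀ r : ℕ,
      (fun n => c n / ((4 : ℝ)) ^ (n.choose 2) -
          (1 - ∑ k ∈ Finset.Icc 1 r,
            it3 k * (n.choose k) * ((4 : ℝ)) ^ (k * (k + 1) / 2) /
              ((4 : ℝ)) ^ (k * n)))
        =O[atTop] fun n => (n : ℝ) ^ (r + 1) / ((4 : ℝ)) ^ ((r + 1) * n) := by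
  have hexp' : Aps = expPS (Cps c) := hexp
  have hit' : Ips it3 = 1 - (Aps)⁻¹ := hit
  have hF1 := F1 it3 hit' hit0
  have hF2 := F2 c it3 hexp' hc0 hit' hit0
  have hL2 := L2 it3 hit'
  have heRec := eRec it3 hit'
  obtain ⟨C₀, hC₀pos, hiB⟩ := i_bound (fun l => it3 l / (Nat.factorial l))
    (by simp [hit0]) hF1
  choose KE hKEpos hKEb using exp_err (fun l => it3 l / (Nat.factorial l)) ee C₀ hC₀pos hiB
    hF1 ee_zero heRec
  intro r
  rw [Asymptotics.isBigO_iff]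
  set Kc : ℝ := 2 * 4^((r+1)*(r+1)) + 4^((r+2)*(r+2)) with hKc
  have hKcpos : (0:ℝ) < Kc := by rw [hKc]; positivity
  set CA : ℝ := ∑ m ∈ Ioc 0 r, (r:ℝ) * KE (r-m) * 4^((r+1)*r) with hCA
  have hCAnn : 0 ≤ CA := by
    rw [hCA]
    apply Finset.sum_nonneg
    intro m _
    have := hKEpos (r-m)
    positivity
  refine ⟨CA + C₀ * Kc, ?_⟩
  filter_upwards [Filter.eventually_ge_atTop (2*r+2)] with n hn2
  have hn1 : 1 ≤ n := by omega
  have hupos := uu_pos n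
  have hφnn : (0:ℝ) ≤ (n:ℝ)^(r+1)/4^((r+1)*n) := by positivity
  set φ : ℝ := (n:ℝ)^(r+1)/4^((r+1)*n) with hφ
  set ν : ℝ := (c n / (Nat.factorial n)) - uu n
      + ∑ k ∈ Ioc 0 r, (it3 k / (Nat.factorial k)) * uu (n-k) with hν
  set Err : ℕ → ℝ := fun m => (it3 (n-m) / (Nat.factorial (n-m)))
      - ∑ j ∈ range (r+1-m), ee j * uu (n-m-j) with hErrDef
  set MidQ : ℝ := ∑ q ∈ Ioc r (n-(r+1)),
      (it3 q / (Nat.factorial q)) * (uu (n-q) * ((n-q:ℕ):ℝ)) with hMidQ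
  -- (a) exact identity
  have ha : (n:ℝ) * ν = -(∑ m ∈ Ioc 0 r, (m:ℝ) * uu m * Err m) - MidQ := by
    have hs1 : (∑ q ∈ Ioc 0 r, (it3 q / (Nat.factorial q)) * (uu (n-q) * ((n-q:ℕ):ℝ)))
        + (∑ q ∈ Ioc r (n-(r+1)), (it3 q / (Nat.factorial q)) * (uu (n-q) * ((n-q:ℕ):ℝ)))
        = ∑ q ∈ Ioc 0 (n-(r+1)), (it3 q / (Nat.factorial q)) * (uu (n-q) * ((n-q:ℕ):ℝ)) :=
      Finset.sum_Ioc_consecutive _ (by omega) (by omega)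
    have hs2 : (∑ q ∈ Ioc 0 (n-(r+1)), (it3 q / (Nat.factorial q)) * (uu (n-q) * ((n-q:ℕ):ℝ)))
        + (∑ q ∈ Ioc (n-(r+1)) (n-1), (it3 q / (Nat.factorial q)) * (uu (n-q) * ((n-q:ℕ):ℝ)))
        = ∑ q ∈ Ioc 0 (n-1), (it3 q / (Nat.factorial q)) * (uu (n-q) * ((n-q:ℕ):ℝ)) :=
      Finset.sum_Ioc_consecutive _ (by omega) (by omega)
    have hrefl : ∑ q ∈ Ioc (n-(r+1)) (n-1),
        (it3 q / (Nat.factorial q)) * (uu (n-q) * ((n-q:ℕ):ℝ))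
        = ∑ m ∈ Ioc 0 r, (m:ℝ) * uu m * (it3 (n-m) / (Nat.factorial (n-m))) := by
      rw [sum_Ioc_reflect' (fun q => (it3 q / (Nat.factorial q)) * (uu (n-q) * ((n-q:ℕ):ℝ)))
        r n (by omega)]
      apply Finset.sum_congr rfl
      intro m hm
      rw [Finset.mem_Ioc] at hm
      rw [show n - (n-m) = m by omega]
      ring
    have hcomb : ∀ k ∈ Ioc 0 r,
        (n:ℝ) * ((it3 k / (Nat.factorial k)) * uu (n-k))
          - (it3 k / (Nat.factorial k)) * (uu (n-k) * ((n-k:ℕ):ℝ))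
        = (k:ℝ) * (it3 k / (Nat.factorial k)) * uu (n-k) := by
      intro k hk
      rw [Finset.mem_Ioc] at hk
      rw [Nat.cast_sub (by omega)]
      ring
    have hmain1 : ∑ k ∈ Ioc 0 r, (k:ℝ) * (it3 k / (Nat.factorial k)) * uu (n-k)
        = ∑ t ∈ Ioc 0 r, (∑ m ∈ Ioc 0 t, ((m:ℝ) * uu m) * ee (t-m)) * uu (n-t) := by
      apply Finset.sum_congr rfl
      intro k hk
      rw [Finset.mem_Ioc] at hk
      rw [hL2 k hk.1]
    have hmain2 : ∑ m ∈ Ioc 0 r, (m:ℝ) * uu m * (it3 (n-m) / (Nat.factorial (n-m)))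
        = ∑ m ∈ Ioc 0 r, ((m:ℝ) * uu m) * (∑ j ∈ range (r+1-m), ee j * uu (n-m-j))
          + ∑ m ∈ Ioc 0 r, (m:ℝ) * uu m * Err m := by
      rw [← Finset.sum_add_distrib]
      apply Finset.sum_congr rfl
      intro m _
      rw [hErrDef]
      ring
    have hreg := regroup (fun m => (m:ℝ) * uu m) ee r n
    have hdist : (n:ℝ) * (∑ k ∈ Ioc 0 r, (it3 k / (Nat.factorial k)) * uu (n-k))
        = ∑ k ∈ Ioc 0 r, (n:ℝ) * ((it3 k / (Nat.factorial k)) * uu (n-k)) := by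
      rw [Finset.mul_sum]
    have hF2n := hF2 n hn1
    have hsumcomb : ∑ k ∈ Ioc 0 r, (n:ℝ) * ((it3 k / (Nat.factorial k)) * uu (n-k))
        - ∑ q ∈ Ioc 0 r, (it3 q / (Nat.factorial q)) * (uu (n-q) * ((n-q:ℕ):ℝ))
        = ∑ k ∈ Ioc 0 r, (k:ℝ) * (it3 k / (Nat.factorial k)) * uu (n-k) := by
      rw [← Finset.sum_sub_distrib]
      exact Finset.sum_congr rfl hcomb
    rw [hν]
    rw [hreg, ← hmain1] at hmain2
    rw [hrefl] at hs2
    -- now pure linear algebra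
    nlinarith [hF2n, hs1, hs2, hmain2, hdist, hsumcomb, hMidQ]
  -- (b) bound
  have hErrB : ∀ m ∈ Ioc 0 r, (m:ℝ) * uu m * |Err m|
      ≤ (r:ℝ) * KE (r-m) * 4^((r+1)*r) * (φ * uu n) := by
    intro m hm
    rw [Finset.mem_Ioc] at hm
    have hb := hKEb (r-m) (n-m) (by omega)
    have hsum_eq : ∑ j ∈ range ((r-m)+1), ee j * uu ((n-m)-j)
        = ∑ j ∈ range (r+1-m), ee j * uu (n-m-j) := by
      rw [show r+1-m = r-m+1 by omega]
    rw [hsum_eq] at hb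
    have hb2 : |Err m| ≤ KE (r-m) * (((n-m:ℕ):ℝ)^((r-m)+1)/4^(((r-m)+1)*(n-m))) * uu (n-m) := by
      rw [hErrDef]
      exact hb
    have hprod := prod_bound hm.1 hm.2 hn2
    have hmr : (m:ℝ) ≤ (r:ℝ) := by exact_mod_cast hm.2
    calc (m:ℝ) * uu m * |Err m|
        ≤ (r:ℝ) * (uu m * |Err m|) := by
          have h1 : (0:ℝ) ≤ uu m * |Err m| := mul_nonneg (uu_pos m).le (abs_nonneg _)
          calc (m:ℝ) * uu m * |Err m| = (m:ℝ) * (uu m * |Err m|) := by ring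
            _ ≤ (r:ℝ) * (uu m * |Err m|) := mul_le_mul_of_nonneg_right hmr h1
      _ ≤ (r:ℝ) * (KE (r-m) * (uu m * (((n-m:ℕ):ℝ)^((r-m)+1)/4^(((r-m)+1)*(n-m))) * uu (n-m))) := by
          apply mul_le_mul_of_nonneg_left _ (Nat.cast_nonneg r)
          calc uu m * |Err m|
              ≤ uu m * (KE (r-m) * (((n-m:ℕ):ℝ)^((r-m)+1)/4^(((r-m)+1)*(n-m))) * uu (n-m)) :=
                mul_le_mul_of_nonneg_left hb2 (uu_pos m).le
            _ = KE (r-m) * (uu m * (((n-m:ℕ):ℝ)^((r-m)+1)/4^(((r-m)+1)*(n-m))) * uu (n-m)) := by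
                ring
      _ ≤ (r:ℝ) * (KE (r-m) * (4^((r+1)*r) * ((n:ℝ)^(r+1)/4^((r+1)*n)) * uu n)) := by
          apply mul_le_mul_of_nonneg_left _ (Nat.cast_nonneg r)
          exact mul_le_mul_of_nonneg_left hprod (hKEpos (r-m)).le
      _ = (r:ℝ) * KE (r-m) * 4^((r+1)*r) * (φ * uu n) := by rw [hφ]; ring
  have hSE : |∑ m ∈ Ioc 0 r, (m:ℝ) * uu m * Err m| ≤ CA * (φ * uu n) := by
    refine (Finset.abs_sum_le_sum_abs _ _).trans ?_
    rw [hCA, Finset.sum_mul]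
    apply Finset.sum_le_sum
    intro m hm
    have h1 : |(m:ℝ) * uu m * Err m| = (m:ℝ) * uu m * |Err m| := by
      rw [abs_mul]
      congr 1
      rw [abs_of_nonneg (mul_nonneg (Nat.cast_nonneg m) (uu_pos m).le)]
    rw [h1]
    exact hErrB m hm
  have hMidB : |MidQ| ≤ (n:ℝ) * (C₀ * Kc) * (φ * uu n) := by
    have h1 : |MidQ| ≤ ∑ q ∈ Ioc r (n-(r+1)), (n:ℝ) * C₀ * (uu q * uu (n-q)) := by
      rw [hMidQ]
      refine (Finset.abs_sum_le_sum_abs _ _).trans (Finset.sum_le_sum ?_)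
      intro q hq
      rw [Finset.mem_Ioc] at hq
      rw [abs_mul]
      have h2 : |uu (n-q) * ((n-q:ℕ):ℝ)| = uu (n-q) * ((n-q:ℕ):ℝ) :=
        abs_of_nonneg (mul_nonneg (uu_pos _).le (Nat.cast_nonneg _))
      rw [h2]
      have h3 : ((n-q:ℕ):ℝ) ≤ (n:ℝ) := by exact_mod_cast Nat.sub_le n q
      calc |it3 q / (Nat.factorial q)| * (uu (n-q) * ((n-q:ℕ):ℝ))
          ≤ (C₀ * uu q) * (uu (n-q) * (n:ℝ)) := by
            apply mul_le_mul (hiB q)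
            · exact mul_le_mul_of_nonneg_left h3 (uu_pos (n-q)).le
            · exact mul_nonneg (uu_pos _).le (Nat.cast_nonneg _)
            · exact mul_nonneg hC₀pos.le (uu_pos _).le
        _ = (n:ℝ) * C₀ * (uu q * uu (n-q)) := by ring
    rw [← Finset.mul_sum] at h1
    refine h1.trans ?_
    have h2 := conv_bound r n hn1
    calc (n:ℝ) * C₀ * ∑ q ∈ Ioc r (n-(r+1)), uu q * uu (n-q)
        ≤ (n:ℝ) * C₀ * (Kc * φ * uu n) := by
          apply mul_le_mul_of_nonneg_left _ (by positivity)
          rw [hKc, hφ]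
          exact h2
      _ = (n:ℝ) * (C₀ * Kc) * (φ * uu n) := by ring
  have hνB : |ν| ≤ (CA + C₀ * Kc) * (φ * uu n) := by
    have h0 : |(n:ℝ) * ν| ≤ (n:ℝ) * ((CA + C₀ * Kc) * (φ * uu n)) := by
      rw [ha]
      have h1 : |(-(∑ m ∈ Ioc 0 r, (m:ℝ) * uu m * Err m)) - MidQ|
          ≤ |∑ m ∈ Ioc 0 r, (m:ℝ) * uu m * Err m| + |MidQ| := by
        refine (abs_sub _ _).trans ?_
        rw [abs_neg]
      have hCAn : CA * (φ * uu n) ≤ (n:ℝ) * (CA * (φ * uu n)) := by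
        have : (1:ℝ) ≤ (n:ℝ) := by exact_mod_cast hn1
        nlinarith [mul_nonneg hCAnn (mul_nonneg hφnn hupos.le)]
      calc |(-(∑ m ∈ Ioc 0 r, (m:ℝ) * uu m * Err m)) - MidQ|
          ≤ |∑ m ∈ Ioc 0 r, (m:ℝ) * uu m * Err m| + |MidQ| := h1
        _ ≤ CA * (φ * uu n) + (n:ℝ) * (C₀ * Kc) * (φ * uu n) := by linarith
        _ ≤ (n:ℝ) * (CA * (φ * uu n)) + (n:ℝ) * (C₀ * Kc) * (φ * uu n) := by linarith
        _ = (n:ℝ) * ((CA + C₀ * Kc) * (φ * uu n)) := by ring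
    rw [abs_mul, Nat.abs_cast] at h0
    have hnpos : (0:ℝ) < (n:ℝ) := by exact_mod_cast hn1
    exact le_of_mul_le_mul_left h0 hnpos
  -- (c) final translation
  have hune : uu n ≠ 0 := hupos.ne'
  have heq : c n / ((4:ℝ)) ^ (n.choose 2) -
      (1 - ∑ k ∈ Finset.Icc 1 r,
        it3 k * (n.choose k) * ((4:ℝ)) ^ (k * (k + 1) / 2) / ((4:ℝ)) ^ (k * n))
      = ν / uu n := by
    have hf : ((Nat.factorial n : ℕ):ℝ) ≠ 0 := by positivity
    have h4 : ((4:ℝ))^(n.choose 2) ≠ 0 := by positivity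
    have h1 : c n / ((4:ℝ)) ^ (n.choose 2) = (c n / (Nat.factorial n)) / uu n := by
      unfold uu
      field_simp
    have h2 : ∑ k ∈ Finset.Icc 1 r,
        it3 k * (n.choose k) * ((4:ℝ)) ^ (k * (k + 1) / 2) / ((4:ℝ)) ^ (k * n)
        = (∑ k ∈ Ioc 0 r, (it3 k / (Nat.factorial k)) * uu (n-k)) / uu n := by
      rw [Finset.sum_div]
      have hset : Finset.Icc 1 r = Finset.Ioc 0 r := by rw [← Finset.Icc_add_one_left_eq_Ioc, zero_add]
      rw [hset]
      apply Finset.sum_congr rfl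
      intro k hk
      rw [Finset.mem_Ioc] at hk
      exact term_eq it3 (show k ≤ n by omega)
    rw [h1, h2, hν]
    field_simp
    ring
  rw [Real.norm_eq_abs, Real.norm_eq_abs, heq, abs_div, abs_of_pos hupos,
    abs_of_nonneg hφnn]
  rw [div_le_iff₀ hupos]
  calc |ν| ≤ (CA + C₀ * Kc) * (φ * uu n) := hνB
    _ = (CA + C₀ * Kc) * φ * uu n := by ring

end Aux
end

section
/- For every integer d ≥ 1, the sequence a_n = (d+1)^{n(n−1)/2}/n! is gargantuan. -/
open Filter Asymptotics Finset

/-- triangular numbers -/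
def tri (n : ℕ) : ℕ := n * (n - 1) / 2

lemma tri_succ (n : ℕ) : tri (n + 1) = tri n + n := by
  unfold tri
  rw [← Nat.choose_two_right, ← Nat.choose_two_right, Nat.choose_succ_succ]
  simp [Nat.choose_one_right, Nat.add_comm]

lemma tri_add (a b : ℕ) : tri (a + b) = tri a + tri b + a * b := by
  induction b with
  | zero => simp [tri]
  | succ b ih =>
    rw [← Nat.add_assoc, tri_succ, ih, tri_succ]
    ring

lemma tri_ident (r i j : ℕ) : tri r + tri (r + i + j) = tri (r + j) + tri (r + i) + i * j := by
  rw [Nat.add_assoc, tri_add r (i+j), tri_add i j, tri_add r j, tri_add r i]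
  ring

lemma fact_le_aux (a i : ℕ) : Nat.factorial (a + i) ≤ Nat.factorial a * (a + i) ^ i := by
  induction i with
  | zero => simp
  | succ i ih =>
    rw [← Nat.add_assoc, Nat.factorial_succ, pow_succ]
    calc (a + i + 1) * Nat.factorial (a + i)
        ≤ (a + i + 1) * (Nat.factorial a * (a + i) ^ i) := Nat.mul_le_mul_left _ ih
      _ ≤ Nat.factorial a * ((a + i + 1) ^ i * (a + i + 1)) := by
          rw [mul_comm (a+i+1), mul_assoc]
          exact Nat.mul_le_mul_left _ (Nat.mul_le_mul (Nat.pow_le_pow_left (Nat.le_succ _) i) le_rfl)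

lemma lin_le_two_pow (c : ℕ) : ∀ m : ℕ, c + 16 ≤ m → 4 * m + c ≤ 2 ^ m := by
  intro m
  induction m with
  | zero => omega
  | succ m ih =>
    intro hm
    rcases Nat.lt_or_ge (c + 16) (m + 1) with h | h
    · have h2 : 4 * m + c ≤ 2 ^ m := ih (by omega)
      have h4 : 4 ≤ 2 ^ m := by
        calc 4 = 2 ^ 2 := rfl
        _ ≤ 2 ^ m := Nat.pow_le_pow_right (by norm_num) (by omega)
      rw [pow_succ]
      omega
    · -- m + 1 = c + 16
      have hm1 : m + 1 = c + 16 := by omega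
      have hc : c < 2 ^ c := Nat.lt_two_pow_self
      have : 2 ^ (m + 1) = 2 ^ 16 * 2 ^ c := by rw [hm1, pow_add]; ring
      have h16 : (65536 : ℕ) = 2 ^ 16 := by norm_num
      have : 65536 * (c + 1) ≤ 2 ^ (m+1) := by
        rw [this, ← h16]
        exact Nat.mul_le_mul_left _ (by omega)
      omega

lemma two_n_le (r : ℕ) : ∀ n : ℕ, 10 * r + 37 ≤ n → 2 * n ≤ 2 ^ ((n - 2 * r) / 2) := by
  intro n hn
  set m := (n - 2 * r) / 2 with hm
  have h1 : n ≤ 2 * m + 2 * r + 1 := by omega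
  have h2 : 4 * r + 2 + 16 ≤ m := by omega
  have := lin_le_two_pow (4 * r + 2) m h2
  omega

lemma key (q : ℝ) (hq : 2 ≤ q) (r i j : ℕ) :
    q ^ tri (r + j) / (Nat.factorial (r + j)) * (q ^ tri (r + i) / (Nat.factorial (r + i))) ≤
    q ^ tri r / (Nat.factorial r) * (q ^ tri (r + i + j) / (Nat.factorial (r + i + j))) *
      (((2 * r + i + j : ℕ) : ℝ) / q ^ j) ^ i := by
  have hq0 : (0:ℝ) < q := by linarith
  have hnat : Nat.factorial r * Nat.factorial (r+i+j) ≤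
      (2*r+i+j)^i * (Nat.factorial (r+j) * Nat.factorial (r+i)) := by
    have h1 : Nat.factorial r ≤ Nat.factorial (r+i) := Nat.factorial_le (by omega)
    have h2 : Nat.factorial (r+i+j) ≤ Nat.factorial (r+j) * (2*r+i+j)^i := by
      have h3 := fact_le_aux (r+j) i
      rw [show r + j + i = r + i + j from by omega] at h3
      calc Nat.factorial (r+i+j) ≤ Nat.factorial (r+j) * (r+i+j)^i := h3
        _ ≤ Nat.factorial (r+j) * (2*r+i+j)^i :=
            Nat.mul_le_mul_left _ (Nat.pow_le_pow_left (by omega) i)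
    calc Nat.factorial r * Nat.factorial (r+i+j)
        ≤ Nat.factorial (r+i) * (Nat.factorial (r+j) * (2*r+i+j)^i) := Nat.mul_le_mul h1 h2
      _ = (2*r+i+j)^i * (Nat.factorial (r+j) * Nat.factorial (r+i)) := by ring
  rw [div_mul_div_comm, div_pow, div_mul_div_comm, div_mul_div_comm,
    div_le_div_iff₀ (by positivity) (by positivity)]
  have hA : q ^ tri r * q ^ tri (r + i + j) = q ^ tri (r+j) * q ^ tri (r+i) * q ^ (i*j) := by
    rw [← pow_add, ← pow_add, ← pow_add, tri_ident]
  have hcast : ((Nat.factorial r : ℝ) * (Nat.factorial (r+i+j) : ℝ)) * (q ^ j) ^ i ≤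
      ((((2*r+i+j:ℕ):ℝ))^i * ((Nat.factorial (r+j) : ℝ) * (Nat.factorial (r+i) : ℝ))) * (q ^ j) ^ i := by
    apply mul_le_mul_of_nonneg_right _ (by positivity)
    exact_mod_cast hnat
  calc q ^ tri (r + j) * q ^ tri (r + i) *
        (↑(Nat.factorial r) * ↑(Nat.factorial (r + i + j)) * (q ^ j) ^ i)
      ≤ q ^ tri (r + j) * q ^ tri (r + i) *
        (((((2*r+i+j:ℕ):ℝ))^i * ((Nat.factorial (r+j) : ℝ) * (Nat.factorial (r+i) : ℝ))) * (q ^ j) ^ i) :=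
        mul_le_mul_of_nonneg_left hcast (by positivity)
    _ = q ^ tri r * q ^ tri (r + i + j) * (((2 * r + i + j : ℕ):ℝ)) ^ i *
        (↑(Nat.factorial (r + j)) * ↑(Nat.factorial (r + i))) := by
        rw [hA, ← pow_mul, mul_comm i j]
        ring

lemma term_bound' (q : ℝ) (hq : 2 ≤ q) (r i j : ℕ) (hij : i ≤ j)
    (hN : 10 * r + 37 ≤ 2 * r + i + j) :
    q ^ tri (r + j) / (Nat.factorial (r + j)) * (q ^ tri (r + i) / (Nat.factorial (r + i))) ≤
    q ^ tri r / (Nat.factorial r) * (q ^ tri (r + i + j) / (Nat.factorial (r + i + j))) *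
      ((1:ℝ)/2) ^ i := by
  have hq0 : (0:ℝ) < q := by linarith
  set n := 2 * r + i + j with hn
  have h2n : 2 * n ≤ 2 ^ j := by
    calc 2 * n ≤ 2 ^ ((n - 2 * r) / 2) := two_n_le r n hN
      _ ≤ 2 ^ j := Nat.pow_le_pow_right (by norm_num) (by omega)
  have hqj : ((2 * n : ℕ) : ℝ) ≤ q ^ j := by
    calc ((2 * n : ℕ) : ℝ) ≤ ((2 ^ j : ℕ) : ℝ) := by exact_mod_cast h2n
      _ = (2:ℝ) ^ j := by push_cast; ring
      _ ≤ q ^ j := pow_le_pow_left₀ (by norm_num) hq j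
  have hfrac : ((n : ℕ) : ℝ) / q ^ j ≤ 1/2 := by
    rw [div_le_iff₀ (by positivity)]
    push_cast at hqj ⊢
    linarith
  have hfrac' : (((n : ℕ) : ℝ) / q ^ j) ^ i ≤ ((1:ℝ)/2) ^ i :=
    pow_le_pow_left₀ (by positivity) hfrac i
  calc q ^ tri (r + j) / (Nat.factorial (r + j)) * (q ^ tri (r + i) / (Nat.factorial (r + i)))
      ≤ q ^ tri r / (Nat.factorial r) * (q ^ tri (r + i + j) / (Nat.factorial (r + i + j))) *
        (((n : ℕ) : ℝ) / q ^ j) ^ i := key q hq r i j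
    _ ≤ q ^ tri r / (Nat.factorial r) * (q ^ tri (r + i + j) / (Nat.factorial (r + i + j))) *
        ((1:ℝ)/2) ^ i := mul_le_mul_of_nonneg_left hfrac' (by positivity)

lemma term_bound_s18 (q : ℝ) (hq : 2 ≤ q) (r n k : ℕ) (hN : 10 * r + 37 ≤ n)
    (hk1 : r ≤ k) (hk2 : k ≤ n - r) :
    q ^ tri k / (Nat.factorial k) * (q ^ tri (n - k) / Nat.factorial (n - k)) ≤
    q ^ tri r / Nat.factorial r * (q ^ tri (n - r) / Nat.factorial (n - r)) *
      ((1:ℝ)/2) ^ (min (k - r) (n - r - k)) := by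
  rcases Nat.le_total (k - r) (n - r - k) with h | h
  · -- i = k - r, j = n - r - k
    have e1 : min (k - r) (n - r - k) = k - r := by omega
    have e2 : k = r + (k - r) := by omega
    have e3 : n - k = r + (n - r - k) := by omega
    have e4 : n - r = r + (k - r) + (n - r - k) := by omega
    have := term_bound' q hq r (k - r) (n - r - k) h (by omega)
    rw [← e4] at this
    rw [e1]
    calc q ^ tri k / (Nat.factorial k) * (q ^ tri (n - k) / Nat.factorial (n - k))
        = q ^ tri (r + (n - r - k)) / (Nat.factorial (r + (n - r - k))) *
          (q ^ tri (r + (k - r)) / (Nat.factorial (r + (k - r)))) := by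
          rw [← e2, ← e3]; ring
      _ ≤ _ := this
  · have e1 : min (k - r) (n - r - k) = n - r - k := by omega
    have e2 : k = r + (k - r) := by omega
    have e3 : n - k = r + (n - r - k) := by omega
    have e4 : n - r = r + (n - r - k) + (k - r) := by omega
    have := term_bound' q hq r (n - r - k) (k - r) h (by omega)
    rw [← e4] at this
    rw [e1]
    calc q ^ tri k / (Nat.factorial k) * (q ^ tri (n - k) / Nat.factorial (n - k))
        = q ^ tri (r + (k - r)) / (Nat.factorial (r + (k - r))) *
          (q ^ tri (r + (n - r - k)) / (Nat.factorial (r + (n - r - k)))) := by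
          rw [← e2, ← e3]
      _ ≤ _ := this

lemma geom_sum_le_two (m : ℕ) : ∑ i ∈ Finset.range m, ((1:ℝ)/2) ^ i ≤ 2 := by
  have := geom_sum_eq (show (1:ℝ)/2 ≠ 1 by norm_num) m
  rw [this]
  have h1 : (0:ℝ) ≤ ((1:ℝ)/2) ^ m := by positivity
  rw [div_le_iff_of_neg (by norm_num : (1:ℝ)/2 - 1 < 0)]
  linarith

lemma sum_min_le_four (M : ℕ) :
    ∑ i ∈ Finset.range (M + 1), ((1:ℝ)/2) ^ (min i (M - i)) ≤ 4 := by
  have hle : ∀ i ∈ Finset.range (M + 1), ((1:ℝ)/2) ^ (min i (M - i)) ≤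
      ((1:ℝ)/2) ^ i + ((1:ℝ)/2) ^ (M - i) := by
    intro i _
    rcases Nat.le_total i (M - i) with h | h
    · rw [min_eq_left h]
      have : (0:ℝ) ≤ ((1:ℝ)/2) ^ (M - i) := by positivity
      linarith
    · rw [min_eq_right h]
      have : (0:ℝ) ≤ ((1:ℝ)/2) ^ i := by positivity
      linarith
  calc ∑ i ∈ Finset.range (M + 1), ((1:ℝ)/2) ^ (min i (M - i))
      ≤ ∑ i ∈ Finset.range (M + 1), (((1:ℝ)/2) ^ i + ((1:ℝ)/2) ^ (M - i)) :=
        Finset.sum_le_sum hle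
    _ = ∑ i ∈ Finset.range (M + 1), ((1:ℝ)/2) ^ i +
        ∑ i ∈ Finset.range (M + 1), ((1:ℝ)/2) ^ (M - i) := Finset.sum_add_distrib
    _ ≤ 4 := by
        have h2 : ∑ i ∈ Finset.range (M + 1), ((1:ℝ)/2) ^ (M - i) =
            ∑ i ∈ Finset.range (M + 1), ((1:ℝ)/2) ^ i := by
          rw [← Finset.sum_range_reflect]
          apply Finset.sum_congr rfl
          intro i hi
          simp only [Finset.mem_range] at hi
          congr 1
          omega
        rw [h2]
        have := geom_sum_le_two (M + 1)
        linarith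

/-- the sequence `(d+1)^(n(n-1)/2) / n!` is gargantuan for every `d ≥ 1`. -/
theorem multigraph_sequence_gargantuan (d : ℕ) (hd : 1 ≤ d) :
    Gargantuan fun n => ((d + 1 : ℝ)) ^ (n * (n - 1) / 2) / (Nat.factorial n) := by
  set q : ℝ := (d + 1 : ℝ) with hqdef
  have hq : 2 ≤ q := by
    have : (1:ℝ) ≤ (d:ℝ) := by exact_mod_cast hd
    simp only [hqdef]; linarith
  have hq0 : (0:ℝ) < q := by linarith
  have hfact : ∀ m : ℕ, (0:ℝ) < (Nat.factorial m : ℝ) := fun m => by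
    exact_mod_cast Nat.factorial_pos m
  constructor
  · -- part 1 : tendsto
    have hlim : Tendsto (fun n : ℕ => q * ((n:ℝ) * (1/q) ^ n)) atTop (nhds 0) := by
      have h1 : Tendsto (fun n : ℕ => (n:ℝ) * (1/q) ^ n) atTop (nhds 0) :=
        tendsto_self_mul_const_pow_of_lt_one (by positivity) (by
          rw [div_lt_one hq0]; linarith)
      simpa using h1.const_mul q
    apply hlim.congr'
    filter_upwards [eventually_ge_atTop 1] with n hn
    obtain ⟨m, rfl⟩ : ∃ m, n = m + 1 := ⟨n - 1, by omega⟩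
    show q * (((m+1:ℕ):ℝ) * (1/q) ^ (m+1)) =
      q ^ tri (m + 1 - 1) / (Nat.factorial (m + 1 - 1)) / (q ^ tri (m+1) / (Nat.factorial (m+1)))
    rw [Nat.add_sub_cancel, tri_succ, pow_add, Nat.factorial_succ]
    have hqm : q ^ m ≠ 0 := by positivity
    have hfm : (Nat.factorial m : ℝ) ≠ 0 := ne_of_gt (hfact m)
    push_cast
    field_simp
    rw [pow_add, one_div, inv_pow, mul_comm, mul_assoc, mul_inv_cancel₀ hqm, mul_one]
  · -- part 2 : big O
    intro r hr
    rw [Asymptotics.isBigO_iff]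
    refine ⟨4 * (q ^ tri r / (Nat.factorial r : ℝ)), ?_⟩
    filter_upwards [eventually_ge_atTop (10 * r + 37)] with n hn
    have hterm : ∀ k, (0:ℝ) ≤ q ^ tri k / (Nat.factorial k : ℝ) *
        (q ^ tri (n-k) / (Nat.factorial (n-k) : ℝ)) := fun k => by positivity
    show ‖∑ k ∈ Finset.Icc r (n - r),
        |q ^ tri k / (Nat.factorial k : ℝ) * (q ^ tri (n-k) / (Nat.factorial (n-k) : ℝ))|‖ ≤
      4 * (q ^ tri r / (Nat.factorial r : ℝ)) * ‖q ^ tri (n-r) / (Nat.factorial (n-r) : ℝ)‖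
    have hsum_nonneg : (0:ℝ) ≤ ∑ k ∈ Finset.Icc r (n - r),
        |q ^ tri k / (Nat.factorial k : ℝ) * (q ^ tri (n-k) / (Nat.factorial (n-k) : ℝ))| :=
      Finset.sum_nonneg fun k _ => abs_nonneg _
    rw [Real.norm_eq_abs, abs_of_nonneg hsum_nonneg, Real.norm_eq_abs,
      abs_of_nonneg (by positivity : (0:ℝ) ≤ q ^ tri (n-r) / (Nat.factorial (n-r) : ℝ))]
    have hM : n - r + 1 - r = (n - 2*r) + 1 := by omega
    calc ∑ k ∈ Finset.Icc r (n - r),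
          |q ^ tri k / (Nat.factorial k : ℝ) * (q ^ tri (n-k) / (Nat.factorial (n-k) : ℝ))|
        = ∑ k ∈ Finset.Icc r (n - r),
          q ^ tri k / (Nat.factorial k : ℝ) * (q ^ tri (n-k) / (Nat.factorial (n-k) : ℝ)) :=
          Finset.sum_congr rfl fun k _ => abs_of_nonneg (hterm k)
      _ ≤ ∑ k ∈ Finset.Icc r (n - r),
          q ^ tri r / (Nat.factorial r : ℝ) * (q ^ tri (n-r) / (Nat.factorial (n-r) : ℝ)) *
            ((1:ℝ)/2) ^ (min (k - r) (n - r - k)) := by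
          apply Finset.sum_le_sum
          intro k hk
          rw [Finset.mem_Icc] at hk
          exact term_bound_s18 q hq r n k hn hk.1 hk.2
      _ = q ^ tri r / (Nat.factorial r : ℝ) * (q ^ tri (n-r) / (Nat.factorial (n-r) : ℝ)) *
            ∑ k ∈ Finset.Icc r (n - r), ((1:ℝ)/2) ^ (min (k - r) (n - r - k)) := by
          rw [← Finset.mul_sum]
      _ ≤ q ^ tri r / (Nat.factorial r : ℝ) * (q ^ tri (n-r) / (Nat.factorial (n-r) : ℝ)) * 4 := by
          apply mul_le_mul_of_nonneg_left _ (by positivity)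
          rw [← Finset.Ico_add_one_right_eq_Icc, Finset.sum_Ico_eq_sum_range, hM]
          have : ∀ i ∈ Finset.range ((n - 2*r) + 1),
              ((1:ℝ)/2) ^ (min (r + i - r) (n - r - (r + i))) =
              ((1:ℝ)/2) ^ (min i ((n - 2*r) - i)) := by
            intro i hi
            congr 2 <;> omega
          rw [Finset.sum_congr rfl this]
          exact sum_min_le_four (n - 2*r)
      _ = 4 * (q ^ tri r / (Nat.factorial r : ℝ)) *
            (q ^ tri (n-r) / (Nat.factorial (n-r) : ℝ)) := by ring
end
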